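/- Let E and F be directed graphs. Then the topological groupoids G_E × ℛ and G_F × ℛ are isomorphic if and only if the topological groupoids G_{SE} and G_{SF} are isomorphic. -/

import Mathlib

universe u v w

/-- An (algebraic) groupoid structure on a type `G` of arrows.  The multiplication is a total
function, but all axioms involving `mul a b` are only imposed when `a` and `b` are composable,
i.e. when `src a = rng b`.  Units are the common values of `src` and `rng`. -/
structure GroupoidStruct (G : Type u) where
  src : G → G
  rng : G → G
  mul : G → G → G
  inv : G → G
  src_src : ∀ a, src (src a) = src a
  rng_src : ∀ a, rng (src a) = src a
  src_rng : ∀ a, src (rng a) = rng a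
  rng_rng : ∀ a, rng (rng a) = rng a
  mul_assoc : ∀ a b c, src a = rng b → src b = rng c → mul (mul a b) c = mul a (mul b c)
  src_mul : ∀ a b, src a = rng b → src (mul a b) = src b
  rng_mul : ∀ a b, src a = rng b → rng (mul a b) = rng a
  mul_src : ∀ a, mul a (src a) = a
  rng_mul_self : ∀ a, mul (rng a) a = a
  src_inv : ∀ a, src (inv a) = rng a
  rng_inv : ∀ a, rng (inv a) = src a
  mul_inv : ∀ a, mul a (inv a) = rng a
  inv_mul : ∀ a, mul (inv a) a = src a

namespace GroupoidStruct

variable {G : Type u} {H : Type v}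

/-- The unit space `G⁰` of a groupoid. -/
def units (S : GroupoidStruct G) : Set G := {x | S.src x = x ∧ S.rng x = x}

/-- The range map, viewed as a map `G → G⁰`. -/
def rngMap (S : GroupoidStruct G) (g : G) : S.units := ⟨S.rng g, S.src_rng g, S.rng_rng g⟩

/-- The source map, viewed as a map `G → G⁰`. -/
def srcMap (S : GroupoidStruct G) (g : G) : S.units := ⟨S.src g, S.src_src g, S.rng_src g⟩

/-- A topological groupoid: inversion is continuous and multiplication is continuous on the
set of composable pairs. -/
structure IsTopologicalGroupoid [TopologicalSpace G] (S : GroupoidStruct G) : Prop where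
  continuous_inv : Continuous S.inv
  continuousOn_mul :
    ContinuousOn (fun p : G × G => S.mul p.1 p.2) {p : G × G | S.src p.1 = S.rng p.2}

/-- An ample groupoid: a topological groupoid whose topology has a basis of compact open sets,
whose unit space is Hausdorff, and whose range and source maps are local homeomorphisms onto
the unit space. -/
structure IsAmple [TopologicalSpace G] (S : GroupoidStruct G)
    extends IsTopologicalGroupoid S : Prop where
  compact_open_basis : ∃ B : Set (Set G),
    (∀ U ∈ B, IsCompact U ∧ IsOpen U) ∧ TopologicalSpace.IsTopologicalBasis B
  t2_units : T2Space S.units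
  isLocalHomeomorph_rngMap : IsLocalHomeomorph S.rngMap
  isLocalHomeomorph_srcMap : IsLocalHomeomorph S.srcMap

/-- `K ⊆ G⁰` is `G`-full if `r(GK) = G⁰`, where `GK = s⁻¹(K)`. -/
def IsFull (S : GroupoidStruct G) (K : Set G) : Prop := S.rng '' (S.src ⁻¹' K) = S.units

/-- `K` is an open subset of the unit space (in the subspace topology of `G⁰`). -/
def IsUnitOpen [TopologicalSpace G] (S : GroupoidStruct G) (K : Set G) : Prop :=
  K ⊆ S.units ∧ IsOpen {x : S.units | (x : G) ∈ K}

/-- `K` is a clopen subset of the unit space (in the subspace topology of `G⁰`). -/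
def IsUnitClopen [TopologicalSpace G] (S : GroupoidStruct G) (K : Set G) : Prop :=
  K ⊆ S.units ∧ IsClopen {x : S.units | (x : G) ∈ K}

/-- `K` is a compact open subset of the unit space. -/
def IsUnitCompactOpen [TopologicalSpace G] (S : GroupoidStruct G) (K : Set G) : Prop :=
  K ⊆ S.units ∧ IsCompact K ∧ IsOpen {x : S.units | (x : G) ∈ K}

/-- An open bisection: an open set on which both the range and the source map restrict to
homeomorphisms onto their images (i.e. are topological embeddings). -/
def IsOpenBisection [TopologicalSpace G] (S : GroupoidStruct G) (U : Set G) : Prop :=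
  IsOpen U ∧ Topology.IsEmbedding (U.restrict S.rng) ∧ Topology.IsEmbedding (U.restrict S.src)

/-- A compact open bisection. -/
def IsCompactOpenBisection [TopologicalSpace G] (S : GroupoidStruct G) (U : Set G) : Prop :=
  IsCompact U ∧ S.IsOpenBisection U

/-- The product of two groupoids, with coordinatewise operations. -/
def prod (S : GroupoidStruct G) (T : GroupoidStruct H) : GroupoidStruct (G × H) where
  src p := (S.src p.1, T.src p.2)
  rng p := (S.rng p.1, T.rng p.2)
  mul p q := (S.mul p.1 q.1, T.mul p.2 q.2)
  inv p := (S.inv p.1, T.inv p.2)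
  src_src a := Prod.ext_iff.mpr ⟨S.src_src _, T.src_src _⟩
  rng_src a := Prod.ext_iff.mpr ⟨S.rng_src _, T.rng_src _⟩
  src_rng a := Prod.ext_iff.mpr ⟨S.src_rng _, T.src_rng _⟩
  rng_rng a := Prod.ext_iff.mpr ⟨S.rng_rng _, T.rng_rng _⟩
  mul_assoc a b c h1 h2 := by
    obtain ⟨h1a, h1b⟩ := Prod.ext_iff.mp h1
    obtain ⟨h2a, h2b⟩ := Prod.ext_iff.mp h2
    exact Prod.ext_iff.mpr ⟨S.mul_assoc _ _ _ h1a h2a, T.mul_assoc _ _ _ h1b h2b⟩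
  src_mul a b h := by
    obtain ⟨ha, hb⟩ := Prod.ext_iff.mp h
    exact Prod.ext_iff.mpr ⟨S.src_mul _ _ ha, T.src_mul _ _ hb⟩
  rng_mul a b h := by
    obtain ⟨ha, hb⟩ := Prod.ext_iff.mp h
    exact Prod.ext_iff.mpr ⟨S.rng_mul _ _ ha, T.rng_mul _ _ hb⟩
  mul_src a := Prod.ext_iff.mpr ⟨S.mul_src _, T.mul_src _⟩
  rng_mul_self a := Prod.ext_iff.mpr ⟨S.rng_mul_self _, T.rng_mul_self _⟩
  src_inv a := Prod.ext_iff.mpr ⟨S.src_inv _, T.src_inv _⟩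
  rng_inv a := Prod.ext_iff.mpr ⟨S.rng_inv _, T.rng_inv _⟩
  mul_inv a := Prod.ext_iff.mpr ⟨S.mul_inv _, T.mul_inv _⟩
  inv_mul a := Prod.ext_iff.mpr ⟨S.inv_mul _, T.inv_mul _⟩

/-- The full equivalence relation `ℛ = ℕ × ℕ`, regarded as a (discrete, principal) groupoid
with unit space `ℕ`. -/
def Rho : GroupoidStruct (ℕ × ℕ) where
  src p := (p.2, p.2)
  rng p := (p.1, p.1)
  mul p q := (p.1, q.2)
  inv p := (p.2, p.1)
  src_src _ := rfl
  rng_src _ := rfl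
  src_rng _ := rfl
  rng_rng _ := rfl
  mul_assoc _ _ _ _ _ := rfl
  src_mul _ _ _ := rfl
  rng_mul _ _ _ := rfl
  mul_src _ := rfl
  rng_mul_self _ := rfl
  src_inv _ := rfl
  rng_inv _ := rfl
  mul_inv _ := rfl
  inv_mul _ := rfl

/-- An isomorphism of topological groupoids: a homeomorphism of the arrow spaces respecting
all the groupoid operations. -/
structure GroupoidIso [TopologicalSpace G] [TopologicalSpace H]
    (S : GroupoidStruct G) (T : GroupoidStruct H) extends G ≃ₜ H where
  map_mul : ∀ a b, S.src a = S.rng b →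
    toHomeomorph (S.mul a b) = T.mul (toHomeomorph a) (toHomeomorph b)
  map_inv : ∀ a, toHomeomorph (S.inv a) = T.inv (toHomeomorph a)
  map_src : ∀ a, toHomeomorph (S.src a) = T.src (toHomeomorph a)
  map_rng : ∀ a, toHomeomorph (S.rng a) = T.rng (toHomeomorph a)

/-- The arrow space `G|_K = r⁻¹(K) ∩ s⁻¹(K)` of the restriction of `G` to `K ⊆ G⁰`,
with the subspace topology. -/
abbrev Restrict (S : GroupoidStruct G) (K : Set G) : Type u :=
  {g : G // S.rng g ∈ K ∧ S.src g ∈ K}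

variable (S : GroupoidStruct G) (K : Set G)

def rsrc (a : S.Restrict K) : S.Restrict K :=
  ⟨S.src a.1, by rw [S.rng_src]; exact a.2.2, by rw [S.src_src]; exact a.2.2⟩

def rrng (a : S.Restrict K) : S.Restrict K :=
  ⟨S.rng a.1, by rw [S.rng_rng]; exact a.2.1, by rw [S.src_rng]; exact a.2.1⟩

def rinv (a : S.Restrict K) : S.Restrict K :=
  ⟨S.inv a.1, by rw [S.rng_inv]; exact a.2.2, by rw [S.src_inv]; exact a.2.1⟩

open Classical in
noncomputable def rmul (a b : S.Restrict K) : S.Restrict K :=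
  if h : S.src a.1 = S.rng b.1 then
    ⟨S.mul a.1 b.1, by rw [S.rng_mul _ _ h]; exact a.2.1, by rw [S.src_mul _ _ h]; exact b.2.2⟩
  else a

@[simp] lemma rsrc_val (a : S.Restrict K) : (S.rsrc K a).1 = S.src a.1 := rfl
@[simp] lemma rrng_val (a : S.Restrict K) : (S.rrng K a).1 = S.rng a.1 := rfl
@[simp] lemma rinv_val (a : S.Restrict K) : (S.rinv K a).1 = S.inv a.1 := rfl

lemma rmul_val (a b : S.Restrict K) (h : S.src a.1 = S.rng b.1) :
    (S.rmul K a b).1 = S.mul a.1 b.1 := by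
  unfold rmul
  rw [dif_pos h]

/-- The restriction `G|_K` of a groupoid to a subset `K` of its unit space. -/
noncomputable def restrict : GroupoidStruct (S.Restrict K) where
  src := S.rsrc K
  rng := S.rrng K
  mul := S.rmul K
  inv := S.rinv K
  src_src a := Subtype.ext (S.src_src a.1)
  rng_src a := Subtype.ext (S.rng_src a.1)
  src_rng a := Subtype.ext (S.src_rng a.1)
  rng_rng a := Subtype.ext (S.rng_rng a.1)
  mul_assoc a b c h1 h2 := by
    have h1' : S.src a.1 = S.rng b.1 := congrArg Subtype.val h1
    have h2' : S.src b.1 = S.rng c.1 := congrArg Subtype.val h2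
    have hab := S.rmul_val K a b h1'
    have hbc := S.rmul_val K b c h2'
    apply Subtype.ext
    calc (S.rmul K (S.rmul K a b) c).1
        = S.mul (S.rmul K a b).1 c.1 :=
          S.rmul_val K _ _ (by rw [hab, S.src_mul _ _ h1']; exact h2')
      _ = S.mul (S.mul a.1 b.1) c.1 := by rw [hab]
      _ = S.mul a.1 (S.mul b.1 c.1) := S.mul_assoc _ _ _ h1' h2'
      _ = S.mul a.1 (S.rmul K b c).1 := by rw [hbc]
      _ = (S.rmul K a (S.rmul K b c)).1 :=
          (S.rmul_val K _ _ (by rw [hbc, S.rng_mul _ _ h2']; exact h1')).symm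
  src_mul a b h := by
    have h' : S.src a.1 = S.rng b.1 := congrArg Subtype.val h
    apply Subtype.ext
    show S.src (S.rmul K a b).1 = S.src b.1
    rw [S.rmul_val K a b h', S.src_mul _ _ h']
  rng_mul a b h := by
    have h' : S.src a.1 = S.rng b.1 := congrArg Subtype.val h
    apply Subtype.ext
    show S.rng (S.rmul K a b).1 = S.rng a.1
    rw [S.rmul_val K a b h', S.rng_mul _ _ h']
  mul_src a := by
    apply Subtype.ext
    rw [S.rmul_val K a _ (by rw [rsrc_val, S.rng_src]), rsrc_val]
    exact S.mul_src a.1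
  rng_mul_self a := by
    apply Subtype.ext
    rw [S.rmul_val K _ a (by rw [rrng_val, S.src_rng]), rrng_val]
    exact S.rng_mul_self a.1
  src_inv a := Subtype.ext (S.src_inv a.1)
  rng_inv a := Subtype.ext (S.rng_inv a.1)
  mul_inv a := by
    apply Subtype.ext
    rw [S.rmul_val K a _ (by rw [rinv_val, S.rng_inv]), rinv_val]
    exact S.mul_inv a.1
  inv_mul a := by
    apply Subtype.ext
    rw [S.rmul_val K _ a (by rw [rinv_val, S.src_inv]), rinv_val]
    exact S.inv_mul a.1

variable {S K}

/-- The data of a groupoid equivalence between `G` and `H`: a space `Z` carrying commuting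
free and proper continuous actions of `G` (on the left) and `H` (on the right), whose anchor
maps `ρ : Z → G⁰` and `σ : Z → H⁰` induce homeomorphisms `Z/H ≅ G⁰` and `G\Z ≅ H⁰`.
The latter conditions are encoded by requiring that the fibres of `ρ` are exactly the
`H`-orbits, that `ρ` is surjective onto `G⁰`, and that `ρ` is a topological quotient map onto
`G⁰` (and symmetrically for `σ`): this says precisely that the induced map `Z/H → G⁰` is a
homeomorphism. -/
structure GroupoidEquivalenceData [TopologicalSpace G] [TopologicalSpace H]
    (S : GroupoidStruct G) (T : GroupoidStruct H) (Z : Type w) [TopologicalSpace Z] where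
  ρ : Z → G
  σ : Z → H
  ρ_unit : ∀ z, ρ z ∈ S.units
  σ_unit : ∀ z, σ z ∈ T.units
  continuous_ρ : Continuous ρ
  continuous_σ : Continuous σ
  actL : G → Z → Z
  actR : Z → H → Z
  ρ_actL : ∀ g z, S.src g = ρ z → ρ (actL g z) = S.rng g
  σ_actL : ∀ g z, S.src g = ρ z → σ (actL g z) = σ z
  actL_unit : ∀ z, actL (ρ z) z = z
  actL_mul : ∀ g g' z, S.src g = S.rng g' → S.src g' = ρ z →
    actL (S.mul g g') z = actL g (actL g' z)
  σ_actR : ∀ z h, σ z = T.rng h → σ (actR z h) = T.src h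
  ρ_actR : ∀ z h, σ z = T.rng h → ρ (actR z h) = ρ z
  actR_unit : ∀ z, actR z (σ z) = z
  actR_mul : ∀ z h h', σ z = T.rng h → T.src h = T.rng h' →
    actR (actR z h) h' = actR z (T.mul h h')
  act_comm : ∀ g z h, S.src g = ρ z → σ z = T.rng h →
    actL g (actR z h) = actR (actL g z) h
  continuousOn_actL :
    ContinuousOn (fun p : G × Z => actL p.1 p.2) {p : G × Z | S.src p.1 = ρ p.2}
  continuousOn_actR :
    ContinuousOn (fun p : Z × H => actR p.1 p.2) {p : Z × H | σ p.1 = T.rng p.2}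
  free_actL : ∀ g z, S.src g = ρ z → actL g z = z → g = ρ z
  free_actR : ∀ z h, σ z = T.rng h → actR z h = z → h = σ z
  proper_actL : IsProperMap (fun p : {q : G × Z // S.src q.1 = ρ q.2} =>
    ((actL p.1.1 p.1.2, p.1.2) : Z × Z))
  proper_actR : IsProperMap (fun p : {q : Z × H // σ q.1 = T.rng q.2} =>
    ((actR p.1.1 p.1.2, p.1.1) : Z × Z))
  ρ_fiber_orbit : ∀ z z', ρ z = ρ z' ↔ ∃ h, σ z = T.rng h ∧ z' = actR z h
  σ_fiber_orbit : ∀ z z', σ z = σ z' ↔ ∃ g, S.src g = ρ z ∧ z' = actL g z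
  ρ_surj : Set.range ρ = S.units
  σ_surj : Set.range σ = T.units
  quotient_ρ : Topology.IsQuotientMap (fun z => (⟨ρ z, ρ_unit z⟩ : S.units))
  quotient_σ : Topology.IsQuotientMap (fun z => (⟨σ z, σ_unit z⟩ : T.units))

/-- `G` and `H` are groupoid equivalent if there exists a `G`–`H` equivalence. -/
def GroupoidEquivalent [TopologicalSpace G] [TopologicalSpace H]
    (S : GroupoidStruct G) (T : GroupoidStruct H) : Prop :=
  ∃ (Z : Type (max u v)) (_ : TopologicalSpace Z), Nonempty (GroupoidEquivalenceData S T Z)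

/-- Kakutani equivalence of ample groupoids: there are full clopen subsets `X ⊆ G⁰`, `Y ⊆ H⁰`
with `G|_X ≅ H|_Y`. -/
def KakutaniEquivalent [TopologicalSpace G] [TopologicalSpace H]
    (S : GroupoidStruct G) (T : GroupoidStruct H) : Prop :=
  ∃ (X : Set G) (Y : Set H), S.IsUnitClopen X ∧ S.IsFull X ∧ T.IsUnitClopen Y ∧ T.IsFull Y ∧
    Nonempty (GroupoidIso (S.restrict X) (T.restrict Y))

end GroupoidStruct
/-! ### Directed graphs, boundary path spaces and graph groupoids -/

/-- A directed graph: vertices, edges, and source/range maps.  We use the convention that a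
path `e₁e₂⋯eₙ` satisfies `r(eᵢ) = s(eᵢ₊₁)`. -/
structure DirGraph : Type (u + 1) where
  V : Type u
  E : Type u
  s : E → V
  r : E → V

namespace DirGraph

/-- `IsPathList Γ v l w`: the list of edges `l` forms a path from `v` to `w`. -/
inductive IsPathList (Γ : DirGraph) : Γ.V → List Γ.E → Γ.V → Prop
  | nil (v : Γ.V) : IsPathList Γ v [] v
  | cons {v w : Γ.V} (e : Γ.E) {l : List Γ.E} (hv : Γ.s e = v)
      (h : IsPathList Γ (Γ.r e) l w) : IsPathList Γ v (e :: l) w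

lemma isPathList_cons_tail {Γ : DirGraph} {v w : Γ.V} {e : Γ.E} {l : List Γ.E}
    (h : Γ.IsPathList v (e :: l) w) : Γ.IsPathList (Γ.r e) l w := by
  cases h; assumption

/-- A finite path in a directed graph. -/
structure FinPath (Γ : DirGraph) where
  src : Γ.V
  edges : List Γ.E
  rng : Γ.V
  isPath : Γ.IsPathList src edges rng

/-- An infinite path in a directed graph. -/
structure InfPath (Γ : DirGraph) where
  edges : ℕ → Γ.E
  compat : ∀ n, Γ.r (edges n) = Γ.s (edges (n + 1))

/-- A sink: a vertex emitting no edges. -/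
def IsSink (Γ : DirGraph) (v : Γ.V) : Prop := ∀ e, Γ.s e ≠ v

/-- An infinite emitter: a vertex emitting infinitely many edges. -/
def IsInfiniteEmitter (Γ : DirGraph) (v : Γ.V) : Prop := {e | Γ.s e = v}.Infinite

def IsBoundaryVertex (Γ : DirGraph) (v : Γ.V) : Prop :=
  Γ.IsSink v ∨ Γ.IsInfiniteEmitter v

/-- The boundary path space `∂E`: all infinite paths together with all finite paths whose
range is a sink or an infinite emitter. -/
inductive BPath (Γ : DirGraph) : Type u
  | fin (p : Γ.FinPath) (hb : Γ.IsBoundaryVertex p.rng) : BPath Γ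
  | inf (x : Γ.InfPath) : BPath Γ

variable {Γ : DirGraph}

namespace BPath

/-- The source (initial vertex) of a boundary path. -/
def src : Γ.BPath → Γ.V
  | .fin p _ => p.src
  | .inf x => Γ.s (x.edges 0)

/-- The length of a boundary path, in `ℕ∞`. -/
def length : Γ.BPath → ℕ∞
  | .fin p _ => (p.edges.length : ℕ∞)
  | .inf _ => ⊤

/-- The `n`-th edge of a boundary path, if defined. -/
def edge? : Γ.BPath → ℕ → Option Γ.E
  | .fin p _, n => p.edges[n]?
  | .inf x, n => some (x.edges n)

/-- Remove the first edge of a boundary path (identity on paths of length zero). -/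
def tail : Γ.BPath → Γ.BPath
  | .fin ⟨v, [], w, h⟩ hb => .fin ⟨v, [], w, h⟩ hb
  | .fin ⟨_, e :: l, w, h⟩ hb => .fin ⟨Γ.r e, l, w, isPathList_cons_tail h⟩ hb
  | .inf x => .inf ⟨fun n => x.edges (n + 1), fun n => x.compat (n + 1)⟩

/-- The shift map `σⁿ`, removing the first `n` edges. -/
def shift (n : ℕ) (x : Γ.BPath) : Γ.BPath := tail^[n] x

/-- Prepend an edge to a boundary path. -/
def cons (e : Γ.E) : (x : Γ.BPath) → x.src = Γ.r e → Γ.BPath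
  | .fin p hb, h => .fin ⟨Γ.s e, e :: p.edges, p.rng, .cons e rfl (h ▸ p.isPath)⟩ hb
  | .inf x, h => .inf ⟨fun n => Nat.casesOn n e fun k => x.edges k,
      fun n => by
        cases n with
        | zero => exact h.symm
        | succ k => exact x.compat k⟩

open Classical in
/-- Prepend an edge to a boundary path when composable; otherwise do nothing. -/
noncomputable def consE (e : Γ.E) (x : Γ.BPath) : Γ.BPath :=
  if h : x.src = Γ.r e then x.cons e h else x

/-- Concatenation `μx` of a finite path `μ` with a boundary path `x` (extending by junk when
the paths are not composable). -/
noncomputable def concat (μ : Γ.FinPath) (x : Γ.BPath) : Γ.BPath :=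
  μ.edges.foldr consE x

/-- `x` has the finite path `μ` as an initial segment. -/
def hasPrefix (x : Γ.BPath) (μ : Γ.FinPath) : Prop :=
  x.src = μ.src ∧ ∀ n < μ.edges.length, x.edge? n = μ.edges[n]?

/-- The cylinder set `Z(μ ∖ F)`. -/
def cyl (μ : Γ.FinPath) (F : Finset Γ.E) : Set Γ.BPath :=
  {x | x.hasPrefix μ ∧ ∀ e ∈ F, x.edge? μ.edges.length ≠ some e}

/-- The topology on the boundary path space, generated by the cylinder sets `Z(μ ∖ F)`. -/
instance : TopologicalSpace Γ.BPath :=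
  TopologicalSpace.generateFrom
    {U | ∃ (μ : Γ.FinPath) (F : Finset Γ.E), (∀ e ∈ F, Γ.s e = μ.rng) ∧ U = cyl μ F}

lemma length_tail (x : Γ.BPath) : x.tail.length = x.length - 1 := by
  cases x with
  | fin p hb =>
    cases p with
    | mk v l w hp =>
      cases l with
      | nil => simp [tail, length, zero_tsub]
      | cons e l' =>
        simp only [tail, length, List.length_cons]
        rw [← Nat.cast_one (R := ℕ∞), ← ENat.coe_sub]
        norm_num
  | inf x => simp [tail, length]

lemma length_shift (n : ℕ) (x : Γ.BPath) : (shift n x).length = x.length - n := by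
  induction n generalizing x with
  | zero => simp [shift]
  | succ k ih =>
    have hs : shift (k + 1) x = tail (shift k x) := Function.iterate_succ_apply' tail k x
    rw [hs, length_tail, ih, tsub_tsub]
    norm_cast

lemma shift_shift (m n : ℕ) (x : Γ.BPath) : shift m (shift n x) = shift (n + m) x := by
  simp only [shift, ← Function.iterate_add_apply]
  rw [Nat.add_comm]

end BPath

lemma enat_add_le {a c : ℕ} {t : ℕ∞} (h1 : (a : ℕ∞) ≤ t) (h2 : (c : ℕ∞) ≤ t - a) :
    ((a + c : ℕ) : ℕ∞) ≤ t := by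
  induction t using ENat.recTopCoe with
  | top => exact le_top
  | coe N =>
    rw [← ENat.coe_sub] at h2
    rw [Nat.cast_le] at h1 h2 ⊢
    omega

/-- The arrow space of the graph groupoid `G_E`. -/
def GraphGpd (Γ : DirGraph) : Type u :=
  {t : Γ.BPath × ℤ × Γ.BPath // ∃ m n : ℕ,
    (m : ℤ) - (n : ℤ) = t.2.1 ∧ (m : ℕ∞) ≤ t.1.length ∧ (n : ℕ∞) ≤ t.2.2.length ∧
    BPath.shift m t.1 = BPath.shift n t.2.2}

/-- The vertex path at a vertex `v`. -/
def FinPath.ofVertex (Γ : DirGraph) (v : Γ.V) : Γ.FinPath := ⟨v, [], v, .nil v⟩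

/-- The topology on the graph groupoid, generated by the basic sets `Z(α, β ∖ F)`. -/
instance (Γ : DirGraph) : TopologicalSpace Γ.GraphGpd :=
  TopologicalSpace.generateFrom
    {U | ∃ (α β : Γ.FinPath) (F : Finset Γ.E), α.rng = β.rng ∧ (∀ e ∈ F, Γ.s e = α.rng) ∧
      U = {t : Γ.GraphGpd | ∃ x : Γ.BPath,
        x ∈ BPath.cyl (FinPath.ofVertex Γ α.rng) F ∧
        t.1 = (BPath.concat α x, (α.edges.length : ℤ) - (β.edges.length : ℤ),
          BPath.concat β x)}}

def gsrc (t : Γ.GraphGpd) : Γ.GraphGpd :=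
  ⟨(t.1.2.2, 0, t.1.2.2), 0, 0, by simp, by simp, by simp, rfl⟩

def grng (t : Γ.GraphGpd) : Γ.GraphGpd :=
  ⟨(t.1.1, 0, t.1.1), 0, 0, by simp, by simp, by simp, rfl⟩

def ginv (t : Γ.GraphGpd) : Γ.GraphGpd :=
  ⟨(t.1.2.2, -t.1.2.1, t.1.1), by
    obtain ⟨m, n, he, hl1, hl2, hs⟩ := t.2
    refine ⟨n, m, ?_, hl2, hl1, hs.symm⟩
    show (n : ℤ) - (m : ℤ) = -t.1.2.1
    omega⟩

open Classical in
noncomputable def gmul (t u : Γ.GraphGpd) : Γ.GraphGpd :=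
  if h : t.1.2.2 = u.1.1 then
    ⟨(t.1.1, t.1.2.1 + u.1.2.1, u.1.2.2), by
      obtain ⟨m1, n1, e1, l1, l1', s1⟩ := t.2
      obtain ⟨m2, n2, e2, l2, l2', s2⟩ := u.2
      rw [h] at l1' s1
      have hlen : t.1.1.length - m1 = u.1.1.length - n1 := by
        have := congrArg BPath.length s1
        rwa [BPath.length_shift, BPath.length_shift] at this
      refine ⟨m1 + (m2 - n1), n2 + (n1 - m2), ?_, ?_, ?_, ?_⟩
      · show ((m1 + (m2 - n1) : ℕ) : ℤ) - ((n2 + (n1 - m2) : ℕ) : ℤ) = t.1.2.1 + u.1.2.1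
        omega
      · refine enat_add_le l1 ?_
        rw [hlen, ENat.coe_sub]
        exact tsub_le_tsub_right l2 _
      · refine enat_add_le l2' ?_
        have hlen2 : u.1.1.length - m2 = u.1.2.2.length - n2 := by
          have := congrArg BPath.length s2
          rwa [BPath.length_shift, BPath.length_shift] at this
        rw [← hlen2, ENat.coe_sub]
        exact tsub_le_tsub_right l1' _
      · have key : n1 + (m2 - n1) = m2 + (n1 - m2) := by omega
        calc BPath.shift (m1 + (m2 - n1)) t.1.1
            = BPath.shift (m2 - n1) (BPath.shift m1 t.1.1) := (BPath.shift_shift _ _ _).symm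
          _ = BPath.shift (m2 - n1) (BPath.shift n1 u.1.1) := by rw [s1]
          _ = BPath.shift (n1 + (m2 - n1)) u.1.1 := BPath.shift_shift _ _ _
          _ = BPath.shift (m2 + (n1 - m2)) u.1.1 := by rw [key]
          _ = BPath.shift (n1 - m2) (BPath.shift m2 u.1.1) := (BPath.shift_shift _ _ _).symm
          _ = BPath.shift (n1 - m2) (BPath.shift n2 u.1.2.2) := by rw [s2]
          _ = BPath.shift (n2 + (n1 - m2)) u.1.2.2 := BPath.shift_shift _ _ _⟩
  else t

@[simp] lemma gsrc_val (t : Γ.GraphGpd) : (gsrc t).1 = (t.1.2.2, 0, t.1.2.2) := rfl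
@[simp] lemma grng_val (t : Γ.GraphGpd) : (grng t).1 = (t.1.1, 0, t.1.1) := rfl
@[simp] lemma ginv_val (t : Γ.GraphGpd) : (ginv t).1 = (t.1.2.2, -t.1.2.1, t.1.1) := rfl

lemma gmul_val (t u : Γ.GraphGpd) (h : t.1.2.2 = u.1.1) :
    (gmul t u).1 = (t.1.1, t.1.2.1 + u.1.2.1, u.1.2.2) := by
  first
    | (unfold gmul; split <;> first | rfl | contradiction)
    | (simp only [gmul]; split <;> first | rfl | contradiction)
    | (unfold gmul; erw [dif_pos h])
    | (delta gmul; simp [h])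

/-- The graph groupoid `G_E` of a directed graph. -/
noncomputable def graphGpd (Γ : DirGraph) : GroupoidStruct Γ.GraphGpd where
  src := gsrc
  rng := grng
  mul := gmul
  inv := ginv
  src_src t := Subtype.ext rfl
  rng_src t := Subtype.ext rfl
  src_rng t := Subtype.ext rfl
  rng_rng t := Subtype.ext rfl
  mul_assoc t u v h1 h2 := by
    have h12 : t.1.2.2 = u.1.1 := congrArg (fun w => w.1.1) h1
    have h23 : u.1.2.2 = v.1.1 := congrArg (fun w => w.1.1) h2
    have htu := gmul_val t u h12
    have huv := gmul_val u v h23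
    have hA : (gmul t u).1.2.2 = v.1.1 := by rw [htu]; exact h23
    have hB : t.1.2.2 = (gmul u v).1.1 := by rw [huv]; exact h12
    apply Subtype.ext
    rw [gmul_val _ _ hA, gmul_val _ _ hB, htu, huv]
    simp [add_assoc]
  src_mul t u h := by
    have h' : t.1.2.2 = u.1.1 := congrArg (fun w => w.1.1) h
    apply Subtype.ext
    show ((gmul t u).1.2.2, (0 : ℤ), (gmul t u).1.2.2) = _
    rw [gmul_val _ _ h']
    rfl
  rng_mul t u h := by
    have h' : t.1.2.2 = u.1.1 := congrArg (fun w => w.1.1) h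
    apply Subtype.ext
    show ((gmul t u).1.1, (0 : ℤ), (gmul t u).1.1) = _
    rw [gmul_val _ _ h']
    rfl
  mul_src t := by
    apply Subtype.ext
    rw [gmul_val _ _ rfl]
    simp
  rng_mul_self t := by
    apply Subtype.ext
    rw [gmul_val _ _ rfl]
    simp
  src_inv t := Subtype.ext rfl
  rng_inv t := Subtype.ext rfl
  mul_inv t := by
    apply Subtype.ext
    rw [gmul_val _ _ rfl]
    simp
  inv_mul t := by
    apply Subtype.ext
    rw [gmul_val _ _ rfl]
    simp

/-! ### The stabilised graph `SE` -/

/-- The graph `SE` obtained from `E` by attaching an infinite head `⋯ f₃ f₂ f₁` at every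
vertex.  The new vertex `Sum.inr (v, i)` is `vᵢ₊₁`, and the new edge `Sum.inr (v, i)` is
`fᵢ₊₁,ᵥ`, with source `vᵢ₊₁` and range `vᵢ` (where `v₀ = v`). -/
def stab (Γ : DirGraph.{u}) : DirGraph.{u} where
  V := Γ.V ⊕ (Γ.V × ℕ)
  E := Γ.E ⊕ (Γ.V × ℕ)
  s e := match e with
    | .inl e => .inl (Γ.s e)
    | .inr (v, i) => .inr (v, i)
  r e := match e with
    | .inl e => .inl (Γ.r e)
    | .inr (v, 0) => .inl v
    | .inr (v, i + 1) => .inr (v, i)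

@[simp] lemma stab_s_inl (e : Γ.E) : Γ.stab.s (Sum.inl e) = Sum.inl (Γ.s e) := rfl
@[simp] lemma stab_s_inr (p : Γ.V × ℕ) : Γ.stab.s (Sum.inr p) = Sum.inr p := rfl
@[simp] lemma stab_r_inl (e : Γ.E) : Γ.stab.r (Sum.inl e) = Sum.inl (Γ.r e) := rfl
@[simp] lemma stab_r_inr_zero (v : Γ.V) : Γ.stab.r (Sum.inr (v, 0)) = Sum.inl v := rfl
@[simp] lemma stab_r_inr_succ (v : Γ.V) (i : ℕ) :
    Γ.stab.r (Sum.inr (v, i + 1)) = Sum.inr (v, i) := rfl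

/-- The source vertex `vᵢ` of the head path `μ_{i,v}`. -/
def headSrcV (Γ : DirGraph) (v : Γ.V) : ℕ → Γ.stab.V
  | 0 => .inl v
  | i + 1 => .inr (v, i)

/-- The edges `fᵢ,ᵥ fᵢ₋₁,ᵥ ⋯ f₁,ᵥ` of the head path `μ_{i,v}`. -/
def headEdges (Γ : DirGraph) (v : Γ.V) : ℕ → List Γ.stab.E
  | 0 => []
  | i + 1 => .inr (v, i) :: headEdges Γ v i

lemma headIsPath (Γ : DirGraph) (v : Γ.V) (i : ℕ) :
    Γ.stab.IsPathList (headSrcV Γ v i) (headEdges Γ v i) (Sum.inl v) := by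
  induction i with
  | zero => exact .nil _
  | succ k ih =>
    have hr : Γ.stab.r (Sum.inr (v, k)) = headSrcV Γ v k := by
      cases k <;> rfl
    exact .cons _ rfl (hr ▸ ih)

/-- The head path `μ_{i,v} = f_{i,v} f_{i-1,v} ⋯ f_{1,v}` from `vᵢ` to `v` in `SE`
(`μ_{0,v}` is the vertex path at `v`). -/
def headPath (Γ : DirGraph) (v : Γ.V) (i : ℕ) : Γ.stab.FinPath :=
  ⟨headSrcV Γ v i, headEdges Γ v i, Sum.inl v, headIsPath Γ v i⟩

lemma isPathList_map_inl {v w : Γ.V} {l : List Γ.E} (h : Γ.IsPathList v l w) :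
    Γ.stab.IsPathList (Sum.inl v) (l.map Sum.inl) (Sum.inl w) := by
  induction h with
  | nil v => exact .nil _
  | cons e hv h ih => exact .cons _ (congrArg Sum.inl hv) ih

lemma isSink_stab {v : Γ.V} (h : Γ.IsSink v) : Γ.stab.IsSink (Sum.inl v) := by
  intro e he
  cases e with
  | inl e' => exact h e' (Sum.inl_injective he)
  | inr p => simp at he

lemma isInfiniteEmitter_stab {v : Γ.V} (h : Γ.IsInfiniteEmitter v) :
    Γ.stab.IsInfiniteEmitter (Sum.inl v) := by
  have hsub : Sum.inl '' {e | Γ.s e = v} ⊆ {e' | Γ.stab.s e' = Sum.inl v} := by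
    rintro _ ⟨e, he, rfl⟩
    exact congrArg Sum.inl he
  exact Set.Infinite.mono hsub (h.image Sum.inl_injective.injOn)

lemma isBoundaryVertex_stab {v : Γ.V} (h : Γ.IsBoundaryVertex v) :
    Γ.stab.IsBoundaryVertex (Sum.inl v) :=
  h.elim (fun h => Or.inl (isSink_stab h)) (fun h => Or.inr (isInfiniteEmitter_stab h))

/-- A finite path of `E`, viewed as a finite path of `SE`. -/
def FinPath.toStab (p : Γ.FinPath) : Γ.stab.FinPath :=
  ⟨Sum.inl p.src, p.edges.map Sum.inl, Sum.inl p.rng, isPathList_map_inl p.isPath⟩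

/-- An infinite path of `E`, viewed as an infinite path of `SE`. -/
def InfPath.toStab (x : Γ.InfPath) : Γ.stab.InfPath :=
  ⟨fun n => Sum.inl (x.edges n), fun n => congrArg Sum.inl (x.compat n)⟩

/-- A boundary path of `E`, viewed as a boundary path of `SE`. -/
def BPath.toStab : Γ.BPath → Γ.stab.BPath
  | .fin p hb => .fin p.toStab (isBoundaryVertex_stab hb)
  | .inf x => .inf x.toStab

end DirGraph


/-! ### Auxiliary infrastructure -/

namespace DirGraph

variable {Γ : DirGraph.{u}}

lemma FinPath.ext' {p q : Γ.FinPath} (h1 : p.src = q.src) (h2 : p.edges = q.edges)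
    (h3 : p.rng = q.rng) : p = q := by
  cases p; cases q
  cases h1; cases h2; cases h3; rfl

lemma InfPath.ext' {p q : Γ.InfPath} (h : p.edges = q.edges) : p = q := by
  cases p; cases q; cases h; rfl

lemma BPath.fin_eq {p q : Γ.FinPath} {hb : Γ.IsBoundaryVertex p.rng}
    {hb' : Γ.IsBoundaryVertex q.rng} (h : p = q) : BPath.fin p hb = BPath.fin q hb' := by
  cases h; rfl

namespace BPath

lemma cons_src (e : Γ.E) (x : Γ.BPath) (h : x.src = Γ.r e) : (x.cons e h).src = Γ.s e := by
  cases x <;> rfl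

lemma cons_tail (e : Γ.E) (x : Γ.BPath) (h : x.src = Γ.r e) : (x.cons e h).tail = x := by
  cases x with
  | fin p hb =>
    obtain ⟨v, l, w, hp⟩ := p
    have h' : v = Γ.r e := h
    exact fin_eq (FinPath.ext' h'.symm rfl rfl)
  | inf y =>
    show BPath.inf _ = BPath.inf _
    exact congrArg _ (InfPath.ext' (funext fun n => rfl))

lemma cons_length (e : Γ.E) (x : Γ.BPath) (h : x.src = Γ.r e) :
    (x.cons e h).length = x.length + 1 := by
  cases x with
  | fin p hb => simp [cons, length]
  | inf y => simp [cons, length]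

lemma cons_edge?_zero (e : Γ.E) (x : Γ.BPath) (h : x.src = Γ.r e) :
    (x.cons e h).edge? 0 = some e := by
  cases x <;> simp [cons, edge?]

lemma cons_edge?_succ (e : Γ.E) (x : Γ.BPath) (h : x.src = Γ.r e) (n : ℕ) :
    (x.cons e h).edge? (n + 1) = x.edge? n := by
  cases x <;> simp [cons, edge?]

lemma consE_of {e : Γ.E} {x : Γ.BPath} (h : x.src = Γ.r e) : consE e x = x.cons e h := by
  unfold consE
  rw [dif_pos h]

lemma exists_cons (x : Γ.BPath) (hx : 1 ≤ x.length) :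
    ∃ (e : Γ.E) (h : x.tail.src = Γ.r e), Γ.s e = x.src ∧ x = x.tail.cons e h := by
  cases x with
  | fin p hb =>
    obtain ⟨v, l, w, hp⟩ := p
    cases l with
    | nil => simp [length] at hx
    | cons e l' =>
      have hse : Γ.s e = v := by cases hp; assumption
      refine ⟨e, rfl, hse, ?_⟩
      exact fin_eq (FinPath.ext' hse.symm rfl rfl)
  | inf y =>
    refine ⟨y.edges 0, (y.compat 0).symm, rfl, ?_⟩
    show BPath.inf _ = BPath.inf _
    refine congrArg _ (InfPath.ext' (funext fun n => ?_))
    cases n <;> rfl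

lemma tail_of_length_zero {x : Γ.BPath} (h : x.length = 0) : x.tail = x := by
  cases x with
  | fin p hb =>
    obtain ⟨v, l, w, hp⟩ := p
    cases l with
    | nil => rfl
    | cons e l' => simp [length] at h
  | inf y => simp [length] at h

lemma shift_of_length_zero {x : Γ.BPath} (h : x.length = 0) (n : ℕ) : shift n x = x := by
  induction n with
  | zero => rfl
  | succ k ih =>
    rw [shift, Function.iterate_succ_apply', ← shift, ih, tail_of_length_zero h]

lemma shift_succ (n : ℕ) (x : Γ.BPath) : shift (n + 1) x = shift n x.tail :=
  Function.iterate_succ_apply tail n x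

lemma shift_truncate {x : Γ.BPath} {L a : ℕ} (hL : x.length = (L : ℕ∞)) (ha : L ≤ a) :
    shift a x = shift L x := by
  obtain ⟨b, rfl⟩ := Nat.exists_eq_add_of_le ha
  rw [← shift_shift, shift_of_length_zero]
  rw [length_shift, hL, ← ENat.coe_sub, Nat.sub_self, Nat.cast_zero]

end BPath

open BPath

/-! ### toStab lemmas -/

lemma BPath.toStab_src (x : Γ.BPath) : x.toStab.src = Sum.inl x.src := by
  cases x <;> rfl

lemma BPath.toStab_length (x : Γ.BPath) : x.toStab.length = x.length := by
  cases x with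
  | fin p hb => simp [toStab, length, FinPath.toStab]; exact List.length_map ..
  | inf y => rfl

lemma BPath.toStab_edge? (x : Γ.BPath) (n : ℕ) :
    x.toStab.edge? n = (x.edge? n).map Sum.inl := by
  cases x with
  | fin p hb => simp [toStab, edge?, FinPath.toStab]; exact List.getElem?_map ..
  | inf y => rfl

lemma BPath.toStab_injective : Function.Injective (BPath.toStab (Γ := Γ)) := by
  intro x₁ x₂ h
  cases x₁ with
  | fin p hb =>
    cases x₂ with
    | fin q hb' =>
      obtain ⟨v, l, w, hp⟩ := p
      obtain ⟨v', l', w', hq⟩ := q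
      injection h with hpq
      injection hpq with h1 h2 h3
      exact fin_eq (FinPath.ext' (Sum.inl_injective h1)
        (List.map_injective_iff.mpr Sum.inl_injective h2) (Sum.inl_injective h3))
    | inf y => exact absurd h (by simp [toStab])
  | inf y =>
    cases x₂ with
    | fin q hb' => exact absurd h (by simp [toStab])
    | inf y' =>
      obtain ⟨f, hc⟩ := y
      obtain ⟨f', hc'⟩ := y'
      injection h with hyy
      injection hyy with hf
      exact congrArg _ (InfPath.ext' (funext fun n => Sum.inl_injective (congrFun hf n)))

lemma BPath.toStab_cons (e : Γ.E) (x : Γ.BPath) (h : x.src = Γ.r e)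
    (h' : x.toStab.src = Γ.stab.r (Sum.inl e)) :
    (x.cons e h).toStab = x.toStab.cons (Sum.inl e) h' := by
  cases x with
  | fin p hb => exact fin_eq (FinPath.ext' rfl rfl rfl)
  | inf y =>
    show BPath.inf _ = BPath.inf _
    refine congrArg _ (InfPath.ext' (funext fun n => ?_))
    cases n <;> rfl

lemma BPath.toStab_consE (e : Γ.E) (x : Γ.BPath) :
    (consE e x).toStab = consE (Sum.inl e) x.toStab := by
  by_cases h : x.src = Γ.r e
  · have h' : x.toStab.src = Γ.stab.r (Sum.inl e) := by
      rw [toStab_src, stab_r_inl, h]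
    rw [consE_of h, consE_of h', toStab_cons e x h h']
  · have h' : ¬ x.toStab.src = Γ.stab.r (Sum.inl e) := by
      rw [toStab_src, stab_r_inl]
      exact fun hc => h (Sum.inl_injective hc)
    unfold consE
    rw [dif_neg h, dif_neg h']

lemma BPath.toStab_tail (x : Γ.BPath) : x.tail.toStab = x.toStab.tail := by
  cases x with
  | fin p hb =>
    obtain ⟨v, l, w, hp⟩ := p
    cases l with
    | nil => rfl
    | cons e l' => exact fin_eq (FinPath.ext' rfl rfl rfl)
  | inf y => rfl

lemma BPath.toStab_shift (n : ℕ) (x : Γ.BPath) :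
    (shift n x).toStab = shift n x.toStab := by
  induction n generalizing x with
  | zero => rfl
  | succ k ih => rw [shift_succ, shift_succ, ih, toStab_tail]

/-! ### foldr consE lemmas -/

lemma foldr_src {v w : Γ.V} {l : List Γ.E} (hp : Γ.IsPathList v l w) (x : Γ.BPath)
    (hx : x.src = w) : (l.foldr BPath.consE x).src = v := by
  induction hp with
  | nil v => exact hx
  | cons e hv h ih =>
    rw [List.foldr_cons, consE_of (ih hx), cons_src]
    exact hv

lemma foldr_shift {v w : Γ.V} {l : List Γ.E} (hp : Γ.IsPathList v l w) (x : Γ.BPath)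
    (hx : x.src = w) : shift l.length (l.foldr BPath.consE x) = x := by
  induction hp with
  | nil v => rfl
  | cons e hv h ih =>
    rw [List.foldr_cons, consE_of (foldr_src h x hx), List.length_cons, shift_succ, cons_tail]
    exact ih hx

lemma foldr_length {v w : Γ.V} {l : List Γ.E} (hp : Γ.IsPathList v l w) (x : Γ.BPath)
    (hx : x.src = w) : (l.foldr BPath.consE x).length = l.length + x.length := by
  induction hp with
  | nil v => simp
  | cons e hv h ih =>
    rw [List.foldr_cons, consE_of (foldr_src h x hx), cons_length, ih hx, List.length_cons]
    push_cast
    ring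

lemma foldr_edge?_lt {v w : Γ.V} {l : List Γ.E} (hp : Γ.IsPathList v l w) (x : Γ.BPath)
    (hx : x.src = w) : ∀ {n : ℕ}, n < l.length →
    (l.foldr BPath.consE x).edge? n = l[n]? := by
  induction hp with
  | nil v => intro n hn; simp at hn
  | cons e hv h ih =>
    intro n hn
    rw [List.foldr_cons, consE_of (foldr_src h x hx)]
    cases n with
    | zero => rw [cons_edge?_zero]; simp
    | succ m =>
      rw [cons_edge?_succ, ih hx (by simpa using hn)]
      simp

lemma foldr_edge?_ge {v w : Γ.V} {l : List Γ.E} (hp : Γ.IsPathList v l w) (x : Γ.BPath)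
    (hx : x.src = w) (n : ℕ) :
    (l.foldr BPath.consE x).edge? (l.length + n) = x.edge? n := by
  induction hp with
  | nil v => simp
  | cons e hv h ih =>
    rw [List.foldr_cons, consE_of (foldr_src h x hx), List.length_cons,
      Nat.add_right_comm, cons_edge?_succ]
    exact ih hx

/-! ### headEdges and stabFin -/

lemma headEdges_length (v : Γ.V) (i : ℕ) : (headEdges Γ v i).length = i := by
  induction i with
  | zero => rfl
  | succ k ih => exact congrArg (· + 1) ih

lemma r_inr (v : Γ.V) (i : ℕ) : Γ.stab.r (Sum.inr (v, i)) = headSrcV Γ v i := by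
  cases i <;> rfl

lemma headSrcV_inj {v w : Γ.V} {i j : ℕ} (h : headSrcV Γ v i = headSrcV Γ w j) :
    v = w ∧ i = j := by
  cases i with
  | zero =>
    cases j with
    | zero => exact ⟨Sum.inl_injective h, rfl⟩
    | succ m => exact absurd h (by simp [headSrcV])
  | succ m =>
    cases j with
    | zero => exact absurd h (by simp [headSrcV])
    | succ m' =>
      injection h with h'
      injection h' with h1 h2
      exact ⟨h1, by omega⟩

lemma isPathList_append {v w z : Γ.V} {l l' : List Γ.E} (h1 : Γ.IsPathList v l w)
    (h2 : Γ.IsPathList w l' z) : Γ.IsPathList v (l ++ l') z := by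
  induction h1 with
  | nil v => exact h2
  | cons e hv h ih => exact .cons e hv (ih h2)

lemma headEdges_take (v : Γ.V) : ∀ (d n : ℕ), d ≤ n →
    (headEdges Γ v n).take d ++ headEdges Γ v (n - d) = headEdges Γ v n := by
  intro d
  induction d with
  | zero => intro n _; simp
  | succ k ih =>
    intro n hn
    obtain ⟨m, rfl⟩ : ∃ m, n = m + 1 := ⟨n - 1, by omega⟩
    show (List.cons (α := Γ.stab.E) (Sum.inr (v, m)) (headEdges Γ v m)).take (k+1) ++ _ = _
    rw [Nat.succ_sub_succ]
    exact congrArg (List.cons _) (ih m (by omega))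

/-- `Sum.inl` as a map `E¹ → SE¹`. -/
def inlE (Γ : DirGraph.{u}) : Γ.E → Γ.stab.E := Sum.inl

/-- A finite path of `E` with `i` head edges attached: the path
`f_{i,v} ⋯ f_{1,v} μ` in `SE`. -/
def stabFin (i : ℕ) (μ : Γ.FinPath) : Γ.stab.FinPath :=
  ⟨headSrcV Γ μ.src i, headEdges Γ μ.src i ++ μ.edges.map Γ.inlE, Sum.inl μ.rng,
    isPathList_append (headIsPath Γ μ.src i) (isPathList_map_inl μ.isPath)⟩

@[simp] lemma stabFin_src (i : ℕ) (μ : Γ.FinPath) :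
    (stabFin i μ).src = headSrcV Γ μ.src i := rfl

@[simp] lemma stabFin_rng (i : ℕ) (μ : Γ.FinPath) : (stabFin i μ).rng = Sum.inl μ.rng := rfl

@[simp] lemma stabFin_edges (i : ℕ) (μ : Γ.FinPath) :
    (stabFin i μ).edges = headEdges Γ μ.src i ++ μ.edges.map Γ.inlE := rfl

lemma stabFin_edges_length (i : ℕ) (μ : Γ.FinPath) :
    (stabFin i μ).edges.length = i + μ.edges.length := by
  simp [headEdges_length]

/-! ### stabPath -/

/-- A boundary path of `E` with `i` head edges attached. -/
noncomputable def stabPath (i : ℕ) (x : Γ.BPath) : Γ.stab.BPath :=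
  BPath.concat (headPath Γ x.src i) x.toStab

lemma stabPath_zero (x : Γ.BPath) : stabPath 0 x = x.toStab := rfl

lemma stabPath_eq_foldr (i : ℕ) (x : Γ.BPath) :
    stabPath i x = (headEdges Γ x.src i).foldr BPath.consE x.toStab := rfl

lemma stabPath_src (i : ℕ) (x : Γ.BPath) : (stabPath i x).src = headSrcV Γ x.src i :=
  foldr_src (headIsPath Γ x.src i) _ (BPath.toStab_src x)

lemma stabPath_succ (i : ℕ) (x : Γ.BPath) :
    stabPath (i + 1) x = (stabPath i x).cons (Sum.inr (x.src, i))
      (by rw [stabPath_src, r_inr]) := by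
  rw [stabPath_eq_foldr]
  show BPath.consE _ ((headEdges Γ x.src i).foldr BPath.consE x.toStab) = _
  rw [← stabPath_eq_foldr]
  exact BPath.consE_of _

lemma stabPath_shift (i : ℕ) (x : Γ.BPath) : BPath.shift i (stabPath i x) = x.toStab := by
  have := foldr_shift (headIsPath Γ x.src i) _ (BPath.toStab_src x)
  rwa [headEdges_length] at this

lemma stabPath_length (i : ℕ) (x : Γ.BPath) : (stabPath i x).length = i + x.length := by
  have := foldr_length (headIsPath Γ x.src i) _ (BPath.toStab_src x)
  rwa [headEdges_length, BPath.toStab_length] at this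

lemma stabPath_inj {i j : ℕ} {x y : Γ.BPath} (h : stabPath i x = stabPath j y) :
    i = j ∧ x = y := by
  have hsrc : headSrcV Γ x.src i = headSrcV Γ y.src j := by
    rw [← stabPath_src, ← stabPath_src, h]
  obtain ⟨-, rfl⟩ := headSrcV_inj hsrc
  have := congrArg (BPath.shift i) h
  rw [stabPath_shift, stabPath_shift] at this
  exact ⟨rfl, BPath.toStab_injective this⟩

lemma toStab_foldr (l : List Γ.E) (x : Γ.BPath) :
    (l.foldr BPath.consE x).toStab = (l.map Γ.inlE).foldr BPath.consE x.toStab := by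
  induction l with
  | nil => rfl
  | cons e l' ih =>
    show (BPath.consE e _).toStab = _
    rw [BPath.toStab_consE, ih]
    rfl

lemma concat_eq_foldr (μ : Γ.FinPath) (x : Γ.BPath) :
    BPath.concat μ x = μ.edges.foldr BPath.consE x := rfl

lemma stabPath_concat (i : ℕ) (μ : Γ.FinPath) (x : Γ.BPath) (hx : x.src = μ.rng) :
    stabPath i (BPath.concat μ x) = BPath.concat (stabFin i μ) x.toStab := by
  have hsrc : (BPath.concat μ x).src = μ.src := foldr_src μ.isPath x hx
  rw [concat_eq_foldr (stabFin i μ), stabFin_edges, List.foldr_append, ← toStab_foldr]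
  show List.foldr _ (BPath.concat μ x).toStab (Γ.headEdges (BPath.concat μ x).src i) = _
  rw [hsrc]
  rfl

/-! ### Decomposition of boundary paths of `SE` -/

lemma isPathList_inl_decomp {u : Γ.V} {l : List Γ.stab.E} {W : Γ.stab.V}
    (h : Γ.stab.IsPathList (Sum.inl u) l W) :
    ∃ (l' : List Γ.E) (w : Γ.V), l = l'.map Γ.inlE ∧ W = Sum.inl w ∧ Γ.IsPathList u l' w := by
  induction l generalizing u with
  | nil =>
    change Γ.stab.IsPathList (headSrcV Γ u 0) _ W at h
    cases h
    exact ⟨[], u, rfl, rfl, .nil u⟩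
  | cons e l ih =>
    change Γ.stab.IsPathList (headSrcV Γ u 0) _ W at h
    cases h with
    | cons _ hv h' =>
      cases e with
      | inl e₀ =>
        have hse : Γ.s e₀ = u := Sum.inl_injective hv
        obtain ⟨l', w, rfl, rfl, hp⟩ := ih (u := Γ.r e₀) h'
        exact ⟨e₀ :: l', w, rfl, rfl, .cons e₀ hse hp⟩
      | inr p => exact absurd hv Sum.inr_ne_inl

lemma isPathList_inr_decomp {u : Γ.V} {p : ℕ} {l : List Γ.stab.E} {W : Γ.stab.V}
    (h : Γ.stab.IsPathList (Sum.inr (u, p)) l W) :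
    (∃ d ≤ p, l = (headEdges Γ u (p+1)).take d ∧ W = Sum.inr (u, p - d)) ∨
    (∃ (l' : List Γ.E) (w : Γ.V), l = headEdges Γ u (p+1) ++ l'.map Γ.inlE ∧
      W = Sum.inl w ∧ Γ.IsPathList u l' w) := by
  induction l generalizing p with
  | nil =>
    change Γ.stab.IsPathList (headSrcV Γ u (p+1)) _ W at h
    cases h
    exact Or.inl ⟨0, Nat.zero_le _, rfl, rfl⟩
  | cons e l ih =>
    change Γ.stab.IsPathList (headSrcV Γ u (p+1)) _ W at h
    cases h with
    | cons _ hv h' =>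
      cases e with
      | inl e₀ => exact absurd hv Sum.inl_ne_inr
      | inr q =>
        have hq : q = (u, p) := Sum.inr_injective hv
        subst hq
        cases p with
        | zero =>
          have h'' : Γ.stab.IsPathList (Sum.inl u) l W := h'
          obtain ⟨l', w, rfl, rfl, hp⟩ := isPathList_inl_decomp h''
          exact Or.inr ⟨l', w, rfl, rfl, hp⟩
        | succ m =>
          have h'' : Γ.stab.IsPathList (Sum.inr (u, m)) l W := h'
          rcases ih h'' with ⟨d, hd, rfl, rfl⟩ | ⟨l', w, rfl, rfl, hp⟩
          · refine Or.inl ⟨d + 1, by omega, ?_, by rw [Nat.succ_sub_succ]⟩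
            show _ = (Sum.inr (u, m + 1) :: headEdges Γ u (m + 1)).take (d + 1)
            rfl
          · refine Or.inr ⟨l', w, ?_, rfl, hp⟩
            show _ = (Sum.inr (u, m + 1) :: headEdges Γ u (m + 1)) ++ _
            rfl

lemma isBoundaryVertex_of_stab {w : Γ.V} (h : Γ.stab.IsBoundaryVertex (Sum.inl w)) :
    Γ.IsBoundaryVertex w := by
  cases h with
  | inl h =>
    exact Or.inl fun e he => h (Sum.inl e) (congrArg Sum.inl he)
  | inr h =>
    refine Or.inr fun hfin => h ?_
    refine Set.Finite.subset (hfin.image Sum.inl) ?_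
    rintro (e | q) he
    · exact ⟨e, Sum.inl_injective he, rfl⟩
    · exact absurd (show Γ.stab.s (Sum.inr q) = Sum.inl w from he) (by simp)

lemma not_isBoundaryVertex_inr (v : Γ.V) (i : ℕ) :
    ¬ Γ.stab.IsBoundaryVertex (Sum.inr (v, i)) := by
  rintro (h | h)
  · exact h (Sum.inr (v, i)) rfl
  · refine h ?_
    have : {e : Γ.stab.E | Γ.stab.s e = Sum.inr (v, i)} ⊆ {Sum.inr (v, i)} := by
      rintro (e | q) he
      · exact absurd he Sum.inl_ne_inr
      · have : q = (v, i) := Sum.inr_injective he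
        simp [this]; exact Set.mem_singleton _
    exact Set.Finite.subset (Set.finite_singleton _) this

lemma BPath.cons_congr {e : Γ.E} {x y : Γ.BPath} (h : x = y) (hx : x.src = Γ.r e)
    (hy : y.src = Γ.r e) : x.cons e hx = y.cons e hy := by
  cases h; rfl

lemma exists_toStab {z : Γ.stab.BPath} {u : Γ.V} (h : z.src = Sum.inl u) :
    ∃ x : Γ.BPath, x.src = u ∧ z = x.toStab := by
  cases z with
  | fin p hb =>
    obtain ⟨v, l, w, hp⟩ := p
    have hv : v = Sum.inl u := h
    subst hv
    obtain ⟨l', w', rfl, rfl, hp'⟩ := isPathList_inl_decomp hp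
    have hb' : Γ.IsBoundaryVertex w' := isBoundaryVertex_of_stab hb
    exact ⟨.fin ⟨u, l', w', hp'⟩ hb', rfl, BPath.fin_eq (FinPath.ext' rfl rfl rfl)⟩
  | inf y =>
    have key : ∀ n, ∃ e₀ : Γ.E, y.edges n = Sum.inl e₀ := by
      intro n
      induction n with
      | zero =>
        cases he : y.edges 0 with
        | inl e₀ => exact ⟨e₀, rfl⟩
        | inr q =>
          have := h
          rw [BPath.src] at this
          rw [he] at this
          exact absurd this (by simp)
      | succ m ih =>
        obtain ⟨e₀, he₀⟩ := ih
        cases he : y.edges (m + 1) with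
        | inl e₁ => exact ⟨e₁, rfl⟩
        | inr q =>
          have hc := y.compat m
          rw [he₀, he] at hc
          exact absurd hc (by simp)
    choose f hf using key
    have hcompat : ∀ n, Γ.r (f n) = Γ.s (f (n + 1)) := by
      intro n
      have hc := y.compat n
      rw [hf n, hf (n + 1)] at hc
      exact Sum.inl_injective hc
    refine ⟨.inf ⟨f, hcompat⟩, ?_, ?_⟩
    · have := h
      rw [BPath.src, hf 0] at this
      exact Sum.inl_injective this
    · show BPath.inf _ = BPath.inf _
      exact congrArg _ (InfPath.ext' (funext fun n => hf n))

lemma one_le_length_of_src_inr {z : Γ.stab.BPath} {u : Γ.V} {p : ℕ}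
    (h : z.src = Sum.inr (u, p)) : 1 ≤ z.length := by
  cases z with
  | fin q hb =>
    obtain ⟨v, l, w, hp⟩ := q
    cases l with
    | nil =>
      cases hp
      have hv : v = Sum.inr (u, p) := h
      have hb2 : Γ.stab.IsBoundaryVertex v := hb
      rw [hv] at hb2
      exact absurd hb2 (not_isBoundaryVertex_inr u p)
    | cons e l' => simp [BPath.length]
  | inf y => simp [BPath.length]

lemma exists_stabPath {z : Γ.stab.BPath} {u : Γ.V} {p : ℕ} (h : z.src = Sum.inr (u, p)) :
    ∃ x : Γ.BPath, x.src = u ∧ z = stabPath (p + 1) x := by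
  induction p generalizing z with
  | zero =>
    obtain ⟨e, he, hse, hz⟩ := BPath.exists_cons z (one_le_length_of_src_inr h)
    have he' : e = Sum.inr (u, 0) := by
      rw [h] at hse
      cases e with
      | inl e₀ => exact absurd hse (by simp)
      | inr q => exact congrArg Sum.inr (Sum.inr_injective hse)
    subst he'
    have htl : z.tail.src = Sum.inl u := by rw [he]; rfl
    obtain ⟨x, hx, hzx⟩ := exists_toStab htl
    subst hx
    refine ⟨x, rfl, ?_⟩
    rw [hz, stabPath_succ]
    exact BPath.cons_congr hzx _ _
  | succ m ih =>
    obtain ⟨e, he, hse, hz⟩ := BPath.exists_cons z (one_le_length_of_src_inr h)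
    have he' : e = Sum.inr (u, m + 1) := by
      rw [h] at hse
      cases e with
      | inl e₀ => exact absurd hse (by simp)
      | inr q => exact congrArg Sum.inr (Sum.inr_injective hse)
    subst he'
    have htl : z.tail.src = Sum.inr (u, m) := by rw [he]; rfl
    obtain ⟨x, hx, hzx⟩ := ih htl
    subst hx
    refine ⟨x, rfl, ?_⟩
    rw [hz, stabPath_succ]
    exact BPath.cons_congr hzx _ _

lemma exists_stabPath' (z : Γ.stab.BPath) : ∃ (i : ℕ) (x : Γ.BPath), z = stabPath i x := by
  cases hs : z.src with
  | inl u =>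
    obtain ⟨x, -, hz⟩ := exists_toStab hs
    exact ⟨0, x, hz⟩
  | inr q =>
    obtain ⟨x, -, hz⟩ := exists_stabPath (u := q.1) (p := q.2) (by rw [hs])
    exact ⟨q.2 + 1, x, hz⟩

lemma edge?_zero_of_src_inr {z : Γ.stab.BPath} {u : Γ.V} {p : ℕ}
    (h : z.src = Sum.inr (u, p)) : z.edge? 0 = some (Sum.inr (u, p)) := by
  obtain ⟨e, he, hse, hz⟩ := BPath.exists_cons z (one_le_length_of_src_inr h)
  have he' : e = Sum.inr (u, p) := by
    rw [h] at hse
    cases e with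
    | inl e₀ => exact absurd hse (by simp)
    | inr q => exact congrArg Sum.inr (Sum.inr_injective hse)
  rw [hz, BPath.cons_edge?_zero, he']
  exact rfl

/-! ### Prefix extraction -/

lemma enat_le_sub_one {k : ℕ} {t : ℕ∞} (h : ((k + 1 : ℕ) : ℕ∞) ≤ t) : (k : ℕ∞) ≤ t - 1 := by
  induction t using ENat.recTopCoe with
  | top => simp
  | coe N =>
    rw [Nat.cast_le] at h
    rw [← Nat.cast_one, ← ENat.coe_sub, Nat.cast_le]
    omega

lemma exists_prefix : ∀ (m : ℕ) (x : Γ.BPath), (m : ℕ∞) ≤ x.length →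
    ∃ μ : Γ.FinPath, μ.src = x.src ∧ μ.edges.length = m ∧
      μ.rng = (BPath.shift m x).src ∧ BPath.concat μ (BPath.shift m x) = x := by
  intro m
  induction m with
  | zero =>
    intro x _
    exact ⟨FinPath.ofVertex Γ x.src, rfl, rfl, rfl, rfl⟩
  | succ k ih =>
    intro x hx
    have h1 : (1 : ℕ∞) ≤ x.length :=
      le_trans (by exact_mod_cast Nat.succ_le_succ (Nat.zero_le k)) hx
    obtain ⟨e, he, hse, hz⟩ := BPath.exists_cons x h1
    have hk : (k : ℕ∞) ≤ x.tail.length := by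
      rw [BPath.length_tail]
      exact enat_le_sub_one hx
    obtain ⟨μ', h1', h2', h3', h4'⟩ := ih x.tail hk
    refine ⟨⟨Γ.s e, e :: μ'.edges, μ'.rng, .cons e rfl ((h1'.trans he) ▸ μ'.isPath)⟩,
      hse, by simp [h2'], ?_, ?_⟩
    · show μ'.rng = _
      rw [BPath.shift_succ]
      exact h3'
    · show BPath.consE e (BPath.concat μ' (BPath.shift (k + 1) x)) = x
      rw [BPath.shift_succ, h4', BPath.consE_of he]
      exact hz.symm
/-! ### The map `G_E × ℛ → G_{SE}` -/

/-- The underlying map of the isomorphism `G_E × ℛ ≅ G_{SE}`. -/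
noncomputable def stabMap (Γ : DirGraph.{u}) (T : Γ.GraphGpd × (ℕ × ℕ)) : Γ.stab.GraphGpd :=
  ⟨(stabPath T.2.1 T.1.1.1, (T.2.1 : ℤ) + T.1.1.2.1 - (T.2.2 : ℤ), stabPath T.2.2 T.1.1.2.2), by
    obtain ⟨⟨⟨x, k, y⟩, m, n, hk, hm, hn, hs⟩, i, j⟩ := T
    dsimp only at hk hm hn hs ⊢
    refine ⟨i + m, j + n, ?_, ?_, ?_, ?_⟩
    · push_cast
      omega
    · rw [stabPath_length]
      push_cast
      exact add_le_add_right hm _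
    · rw [stabPath_length]
      push_cast
      exact add_le_add_right hn _
    · show BPath.shift (i + m) (stabPath i x) = BPath.shift (j + n) (stabPath j y)
      rw [← BPath.shift_shift, ← BPath.shift_shift, stabPath_shift, stabPath_shift,
        ← BPath.toStab_shift, ← BPath.toStab_shift, hs]⟩

@[simp] lemma stabMap_val (Γ : DirGraph.{u}) (T : Γ.GraphGpd × (ℕ × ℕ)) :
    (stabMap Γ T).1 = (stabPath T.2.1 T.1.1.1, (T.2.1 : ℤ) + T.1.1.2.1 - (T.2.2 : ℤ),
      stabPath T.2.2 T.1.1.2.2) := rfl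

lemma stabMap_injective (Γ : DirGraph.{u}) : Function.Injective (stabMap Γ) := by
  rintro ⟨⟨⟨x, k, y⟩, hw⟩, i, j⟩ ⟨⟨⟨x', k', y'⟩, hw'⟩, i', j'⟩ h
  have h1 : stabPath i x = stabPath i' x' := congrArg (fun T => T.1.1) h
  have h2 : (i : ℤ) + k - (j : ℤ) = (i' : ℤ) + k' - (j' : ℤ) := congrArg (fun T => T.1.2.1) h
  have h3 : stabPath j y = stabPath j' y' := congrArg (fun T => T.1.2.2) h
  obtain ⟨rfl, rfl⟩ := stabPath_inj h1
  obtain ⟨rfl, rfl⟩ := stabPath_inj h3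
  have : k = k' := by omega
  subst this
  rfl

lemma stabMap_surjective (Γ : DirGraph.{u}) : Function.Surjective (stabMap Γ) := by
  rintro ⟨⟨z1, c, z2⟩, M, N, hc, hM, hN, hs⟩
  obtain ⟨i, x, rfl⟩ := exists_stabPath' z1
  obtain ⟨j, y, rfl⟩ := exists_stabPath' z2
  dsimp only at hc hM hN hs
  rw [stabPath_length] at hM hN
  have key : BPath.shift (M + j) x = BPath.shift (N + i) y := by
    apply BPath.toStab_injective
    have e1 : (BPath.shift (M + j) x).toStab
        = BPath.shift (i + j) (BPath.shift M (stabPath i x)) := by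
      rw [BPath.toStab_shift, ← stabPath_shift i x, BPath.shift_shift, BPath.shift_shift,
        show i + (M + j) = M + (i + j) from by omega]
    have e2 : (BPath.shift (N + i) y).toStab
        = BPath.shift (i + j) (BPath.shift N (stabPath j y)) := by
      rw [BPath.toStab_shift, ← stabPath_shift j y, BPath.shift_shift, BPath.shift_shift,
        show j + (N + i) = N + (i + j) from by omega]
    rw [e1, e2, hs]
  have hlen := congrArg BPath.length key
  rw [BPath.length_shift, BPath.length_shift] at hlen
  cases x with
  | fin px hbx =>
    cases y with
    | inf yi =>
      exfalso
      simp only [BPath.length, ← ENat.coe_sub] at hlen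
      rw [ENat.top_sub_coe] at hlen
      exact ENat.coe_ne_top _ hlen
    | fin py hby =>
      set L := px.edges.length with hL
      set Ly := py.edges.length with hLy
      have hxl : (BPath.fin px hbx).length = (L : ℕ∞) := rfl
      have hyl : (BPath.fin py hby).length = (Ly : ℕ∞) := rfl
      have hM' : M ≤ i + L := by
        rw [hxl] at hM
        exact_mod_cast hM
      have hN' : N ≤ j + Ly := by
        rw [hyl] at hN
        exact_mod_cast hN
      have hll : (i + L) - M = (j + Ly) - N := by
        have h2 := congrArg BPath.length hs
        rw [BPath.length_shift, BPath.length_shift, stabPath_length, stabPath_length,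
          hxl, hyl, ← Nat.cast_add, ← Nat.cast_add, ← ENat.coe_sub, ← ENat.coe_sub] at h2
        exact_mod_cast h2
      have hshift : BPath.shift L (BPath.fin px hbx) = BPath.shift Ly (BPath.fin py hby) := by
        by_cases hcase : M + j ≤ L
        · have e3 : BPath.shift L (BPath.fin px hbx)
              = BPath.shift (L - (M + j)) (BPath.shift (M + j) (BPath.fin px hbx)) := by
            rw [BPath.shift_shift, show M + j + (L - (M + j)) = L from by omega]
          rw [e3, key, BPath.shift_shift, show N + i + (L - (M + j)) = Ly from by omega]
        · rw [← BPath.shift_truncate hxl (show L ≤ M + j from by omega),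
            ← BPath.shift_truncate hyl (show Ly ≤ N + i from by omega)]
          exact key
      refine ⟨⟨⟨(BPath.fin px hbx, c + (j : ℤ) - (i : ℤ), BPath.fin py hby), L, Ly, by dsimp only; omega,
        hxl.ge, ?_, ?_⟩, (i, j)⟩, ?_⟩
      · rw [hyl]
      · exact hshift
      · refine Subtype.ext (Prod.ext_iff.mpr ⟨rfl, Prod.ext_iff.mpr ⟨?_, rfl⟩⟩)
        show (i : ℤ) + (c + (j : ℤ) - (i : ℤ)) - (j : ℤ) = c
        ring
  | inf xi =>
    cases y with
    | fin py hby =>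
      exfalso
      simp only [BPath.length, ← ENat.coe_sub] at hlen
      rw [ENat.top_sub_coe] at hlen
      exact ENat.coe_ne_top _ hlen.symm
    | inf yi =>
      refine ⟨⟨⟨(BPath.inf xi, c + (j : ℤ) - (i : ℤ), BPath.inf yi), M + j, N + i, by push_cast; omega,
        le_top, le_top, key⟩, (i, j)⟩, ?_⟩
      refine Subtype.ext (Prod.ext_iff.mpr ⟨rfl, Prod.ext_iff.mpr ⟨?_, rfl⟩⟩)
      show (i : ℤ) + (c + (j : ℤ) - (i : ℤ)) - (j : ℤ) = c
      ring

/-- The bijection `G_E × ℛ ≃ G_{SE}`. -/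
noncomputable def stabEquiv (Γ : DirGraph.{u}) : (Γ.GraphGpd × (ℕ × ℕ)) ≃ Γ.stab.GraphGpd :=
  Equiv.ofBijective (stabMap Γ) ⟨stabMap_injective Γ, stabMap_surjective Γ⟩

/-! ### Cylinder sets and basic open sets -/

/-- `Sum.inl` as an embedding `E¹ ↪ SE¹`. -/
def inlEmb (Γ : DirGraph.{u}) : Γ.E ↪ Γ.stab.E := ⟨Γ.inlE, Sum.inl_injective⟩

lemma stabEquiv_apply (Γ : DirGraph.{u}) (T : Γ.GraphGpd × (ℕ × ℕ)) :
    stabEquiv Γ T = stabMap Γ T := rfl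

lemma mem_cyl_ofVertex {x : Γ.BPath} {v : Γ.V} {F : Finset Γ.E} :
    x ∈ BPath.cyl (FinPath.ofVertex Γ v) F ↔ x.src = v ∧ ∀ e ∈ F, x.edge? 0 ≠ some e := by
  simp [BPath.cyl, BPath.hasPrefix, FinPath.ofVertex]

lemma toStab_mem_cyl {x : Γ.BPath} {v : Γ.V} {F : Finset Γ.E} :
    x.toStab ∈ BPath.cyl (FinPath.ofVertex Γ.stab (Sum.inl v)) (F.map (inlEmb Γ)) ↔
    x ∈ BPath.cyl (FinPath.ofVertex Γ v) F := by
  refine mem_cyl_ofVertex.trans ?_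
  rw [mem_cyl_ofVertex, BPath.toStab_src]
  constructor
  · rintro ⟨h1, h2⟩
    refine ⟨Sum.inl_injective h1, fun e he hc => h2 (Γ.inlE e) (Finset.mem_map_of_mem _ he) ?_⟩
    rw [BPath.toStab_edge?, hc]
    rfl
  · rintro ⟨h1, h2⟩
    refine ⟨congrArg Sum.inl h1, ?_⟩
    intro e' he' hc
    obtain ⟨e, he, rfl⟩ := Finset.mem_map.mp he'
    rw [BPath.toStab_edge?] at hc
    exact h2 e he (Option.map_injective Sum.inl_injective hc)

/-- The basic open set `Z(α, β ∖ F)` of the graph groupoid. -/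
def Zset (Γ : DirGraph.{u}) (α β : Γ.FinPath) (F : Finset Γ.E) : Set Γ.GraphGpd :=
  {t : Γ.GraphGpd | ∃ x : Γ.BPath,
    x ∈ BPath.cyl (FinPath.ofVertex Γ α.rng) F ∧
    t.1 = (BPath.concat α x, (α.edges.length : ℤ) - (β.edges.length : ℤ),
      BPath.concat β x)}

/-- The generating family for the topology of the graph groupoid. -/
def genSet (Γ : DirGraph.{u}) : Set (Set Γ.GraphGpd) :=
  {U | ∃ (α β : Γ.FinPath) (F : Finset Γ.E), α.rng = β.rng ∧ (∀ e ∈ F, Γ.s e = α.rng) ∧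
    U = Zset Γ α β F}

lemma topology_eq (Γ : DirGraph.{u}) :
    (instTopologicalSpaceGraphGpd Γ : TopologicalSpace Γ.GraphGpd)
      = TopologicalSpace.generateFrom (genSet Γ) := rfl

lemma isOpen_of_mem_genSet {Γ' : DirGraph.{v}} {U : Set Γ'.GraphGpd} (h : U ∈ genSet Γ') :
    IsOpen U :=
  TopologicalSpace.GenerateOpen.basic U h

lemma concat_src' {μ : Γ.FinPath} {x : Γ.BPath} (hx : x.src = μ.rng) :
    (BPath.concat μ x).src = μ.src :=
  foldr_src μ.isPath x hx

lemma concat_shift' {μ : Γ.FinPath} {x : Γ.BPath} (hx : x.src = μ.rng) :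
    BPath.shift μ.edges.length (BPath.concat μ x) = x :=
  foldr_shift μ.isPath x hx

lemma concat_length' {μ : Γ.FinPath} {x : Γ.BPath} (hx : x.src = μ.rng) :
    (BPath.concat μ x).length = μ.edges.length + x.length :=
  foldr_length μ.isPath x hx

lemma image_basic (Γ : DirGraph.{u}) (α β : Γ.FinPath) (F : Finset Γ.E) (hr : α.rng = β.rng)
    (i j : ℕ) :
    stabEquiv Γ '' (Zset Γ α β F ×ˢ ({(i, j)} : Set (ℕ × ℕ)))
      = Zset Γ.stab (stabFin i α) (stabFin j β) (F.map (inlEmb Γ)) := by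
  ext T
  constructor
  · rintro ⟨⟨t, p⟩, ⟨⟨xx, hxx, ht⟩, hp⟩, rfl⟩
    obtain rfl : p = (i, j) := hp
    have hsrc : xx.src = α.rng := (mem_cyl_ofVertex.mp hxx).1
    refine ⟨xx.toStab, ?_, ?_⟩
    · show xx.toStab ∈ BPath.cyl (FinPath.ofVertex Γ.stab (stabFin i α).rng) (F.map (inlEmb Γ))
      rw [stabFin_rng]
      exact toStab_mem_cyl.mpr hxx
    · show (stabMap Γ (t, (i, j))).1 = _
      rw [stabMap_val]
      have h1 : t.1.1 = BPath.concat α xx := congrArg Prod.fst ht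
      have h2 : t.1.2.1 = (α.edges.length : ℤ) - (β.edges.length : ℤ) :=
        congrArg (fun q => q.2.1) ht
      have h3 : t.1.2.2 = BPath.concat β xx := congrArg (fun q => q.2.2) ht
      rw [h1, h2, h3]
      refine Prod.ext_iff.mpr ⟨?_, Prod.ext_iff.mpr ⟨?_, ?_⟩⟩
      · exact stabPath_concat i α xx hsrc
      · show (i : ℤ) + _ - (j : ℤ) = ((stabFin i α).edges.length : ℤ) - _
        rw [stabFin_edges_length, stabFin_edges_length]
        push_cast
        ring
      · exact stabPath_concat j β xx (hsrc.trans hr)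
  · rintro ⟨z, hz, hT⟩
    have hzsrc : z.src = Sum.inl α.rng := (mem_cyl_ofVertex.mp hz).1
    obtain ⟨xx, hxsrc, rfl⟩ := exists_toStab hzsrc
    have hxmem : xx ∈ BPath.cyl (FinPath.ofVertex Γ α.rng) F := toStab_mem_cyl.mp hz
    have hβsrc : xx.src = β.rng := hxsrc.trans hr
    refine ⟨(⟨(BPath.concat α xx, (α.edges.length : ℤ) - (β.edges.length : ℤ),
        BPath.concat β xx), α.edges.length, β.edges.length, rfl, ?_, ?_, ?_⟩, (i, j)),
      ⟨⟨xx, hxmem, rfl⟩, rfl⟩, ?_⟩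
    · rw [concat_length' hxsrc]
      exact le_self_add
    · rw [concat_length' hβsrc]
      exact le_self_add
    · rw [concat_shift' hxsrc, concat_shift' hβsrc]
    · refine Subtype.ext ?_
      rw [hT, stabEquiv_apply, stabMap_val]
      dsimp only
      simp only [Prod.mk.injEq]
      refine ⟨stabPath_concat i α xx hxsrc, ?_, stabPath_concat j β xx hβsrc⟩
      rw [stabFin_edges_length, stabFin_edges_length]
      push_cast
      ring

lemma exists_mem_genSet (t : Γ.GraphGpd) : ∃ U ∈ genSet Γ, t ∈ U := by
  obtain ⟨m, n, hk, hm, hn, hs⟩ := t.2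
  obtain ⟨α, hα1, hα2, hα3, hα4⟩ := exists_prefix m t.1.1 hm
  obtain ⟨β, hβ1, hβ2, hβ3, hβ4⟩ := exists_prefix n t.1.2.2 hn
  have hr : α.rng = β.rng := by rw [hα3, hβ3, hs]
  refine ⟨Zset Γ α β ∅, ⟨α, β, ∅, hr, by simp, rfl⟩, ?_⟩
  refine ⟨BPath.shift m t.1.1, mem_cyl_ofVertex.mpr ⟨hα3.symm, by simp⟩, ?_⟩
  refine Prod.ext_iff.mpr ⟨hα4.symm, Prod.ext_iff.mpr ⟨?_, ?_⟩⟩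
  · rw [hα2, hβ2]
    exact hk.symm
  · rw [hs]
    exact hβ4.symm

/-! ### Openness of the map -/

lemma isOpen_image_basic (Γ : DirGraph.{u}) {U : Set Γ.GraphGpd} (hU : U ∈ genSet Γ)
    (p : ℕ × ℕ) : IsOpen (stabEquiv Γ '' (U ×ˢ ({p} : Set (ℕ × ℕ)))) := by
  obtain ⟨α, β, F, hr, hF, rfl⟩ := hU
  obtain ⟨i, j⟩ := p
  rw [image_basic Γ α β F hr i j]
  refine isOpen_of_mem_genSet ⟨stabFin i α, stabFin j β, F.map (inlEmb Γ), ?_, ?_, rfl⟩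
  · rw [stabFin_rng, stabFin_rng, hr]
  · intro e he
    obtain ⟨e₀, he₀, rfl⟩ := Finset.mem_map.mp he
    show Γ.stab.s (Sum.inl e₀) = _
    rw [stab_s_inl, stabFin_rng, hF e₀ he₀]

lemma isOpen_image_slice (Γ : DirGraph.{u}) {W : Set Γ.GraphGpd} (hW : IsOpen W)
    (p : ℕ × ℕ) : IsOpen (stabEquiv Γ '' (W ×ˢ ({p} : Set (ℕ × ℕ)))) := by
  have hW' : TopologicalSpace.GenerateOpen (genSet Γ) W := hW
  clear hW
  induction hW' with
  | basic U hU => exact isOpen_image_basic Γ hU p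
  | univ =>
    have hcov : (Set.univ : Set Γ.GraphGpd) ×ˢ ({p} : Set (ℕ × ℕ))
        = ⋃ U ∈ genSet Γ, U ×ˢ ({p} : Set (ℕ × ℕ)) := by
      ext ⟨t, q⟩
      simp only [Set.mem_prod, Set.mem_univ, true_and, Set.mem_iUnion]
      constructor
      · intro hq
        obtain ⟨U, hU, htU⟩ := exists_mem_genSet t
        exact ⟨U, hU, htU, hq⟩
      · rintro ⟨U, hU, -, hq⟩
        exact hq
    rw [hcov, Set.image_iUnion₂]
    exact isOpen_biUnion fun U hU => isOpen_image_basic Γ hU p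
  | inter U V hU hV ihU ihV =>
    have hUV : (U ∩ V) ×ˢ ({p} : Set (ℕ × ℕ))
        = (U ×ˢ ({p} : Set (ℕ × ℕ))) ∩ (V ×ˢ ({p} : Set (ℕ × ℕ))) := by
      rw [Set.prod_inter_prod, Set.inter_self]
    rw [hUV, Set.image_inter (stabEquiv Γ).injective]
    exact ihU.inter ihV
  | sUnion T hT ih =>
    have hsu : (⋃₀ T) ×ˢ ({p} : Set (ℕ × ℕ)) = ⋃ U ∈ T, U ×ˢ ({p} : Set (ℕ × ℕ)) := by
      ext ⟨t, q⟩
      simp only [Set.mem_prod, Set.mem_sUnion, Set.mem_iUnion]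
      tauto
    rw [hsu, Set.image_iUnion₂]
    exact isOpen_biUnion fun U hU => ih U hU

lemma isOpenMap_stabEquiv (Γ : DirGraph.{u}) : IsOpenMap (stabEquiv Γ) := by
  intro W hW
  have hdecomp : W = ⋃ p : ℕ × ℕ, ((fun t => (t, p)) ⁻¹' W) ×ˢ ({p} : Set (ℕ × ℕ)) := by
    ext ⟨t, q⟩
    simp only [Set.mem_iUnion, Set.mem_prod, Set.mem_preimage, Set.mem_singleton_iff]
    constructor
    · intro h
      exact ⟨q, h, rfl⟩
    · rintro ⟨p, h, rfl⟩
      exact h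
  rw [hdecomp, Set.image_iUnion]
  refine isOpen_iUnion fun p => isOpen_image_slice Γ ?_ p
  exact hW.preimage (continuous_id.prodMk continuous_const)

/-! ### Continuity of the map -/

lemma finPath_decomp (α' : Γ.stab.FinPath) :
    (∃ (i : ℕ) (α₀ : Γ.FinPath), α'.edges = (stabFin i α₀).edges ∧ α'.rng = Sum.inl α₀.rng) ∨
    (∃ (u : Γ.V) (p : ℕ), α'.rng = Sum.inr (u, p) ∧
      α'.edges ++ headEdges Γ u (p + 1) = headEdges Γ u (p + 1 + α'.edges.length)) := by
  obtain ⟨v, l, w, hp⟩ := α'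
  cases v with
  | inl u =>
    obtain ⟨l', w', rfl, rfl, hp'⟩ := isPathList_inl_decomp hp
    refine Or.inl ⟨0, ⟨u, l', w', hp'⟩, ?_, rfl⟩
    show l'.map Γ.inlE = Γ.headEdges u 0 ++ l'.map Γ.inlE
    rfl
  | inr q =>
    obtain ⟨u, qq⟩ := q
    rcases isPathList_inr_decomp hp with ⟨d, hd, rfl, rfl⟩ | ⟨l', w', rfl, rfl, hp'⟩
    · have hlen : ((headEdges Γ u (qq + 1)).take d).length = d := by
        rw [List.length_take, headEdges_length]
        omega
      refine Or.inr ⟨u, qq - d, rfl, ?_⟩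
      rw [hlen, show qq - d + 1 = qq + 1 - d from by omega,
        show qq + 1 - d + d = qq + 1 from by omega]
      exact headEdges_take u d (qq + 1) (by omega)
    · refine Or.inl ⟨qq + 1, ⟨u, l', w', hp'⟩, ?_, rfl⟩
      show _ = Γ.headEdges u (qq + 1) ++ l'.map Γ.inlE
      rfl

open Classical in
lemma finsetF_decomp {F : Finset Γ.stab.E} {w : Γ.V} (hF : ∀ e ∈ F, Γ.stab.s e = Sum.inl w) :
    ∃ F₀ : Finset Γ.E, F = F₀.map (inlEmb Γ) ∧ ∀ e ∈ F₀, Γ.s e = w := by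
  refine ⟨F.preimage (inlEmb Γ) (Sum.inl_injective.injOn), ?_, ?_⟩
  · ext e
    rw [Finset.mem_map]
    constructor
    · intro he
      cases e with
      | inl e₀ =>
        exact ⟨e₀, Finset.mem_preimage.mpr he, rfl⟩
      | inr q => exact absurd (hF _ he) (by simp)
    · rintro ⟨e₀, he₀, rfl⟩
      exact Finset.mem_preimage.mp he₀
  · intro e he
    have := hF (Sum.inl e) (Finset.mem_preimage.mp he)
    rw [stab_s_inl] at this
    exact Sum.inl_injective this

lemma Zset_congr {Γ' : DirGraph.{v}} {α₁ α₂ β₁ β₂ : Γ'.FinPath} (F : Finset Γ'.E)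
    (hα : α₁.edges = α₂.edges) (hβ : β₁.edges = β₂.edges) (hr : α₁.rng = α₂.rng) :
    Zset Γ' α₁ β₁ F = Zset Γ' α₂ β₂ F := by
  simp only [Zset, concat_eq_foldr, hα, hβ, hr]

lemma concat_stabPath {μ : Γ.stab.FinPath} {u : Γ.V} {p : ℕ}
    (happ : μ.edges ++ headEdges Γ u (p + 1) = headEdges Γ u (p + 1 + μ.edges.length))
    (x : Γ.BPath) (hx : x.src = u) :
    BPath.concat μ (stabPath (p + 1) x) = stabPath (p + 1 + μ.edges.length) x := by
  rw [concat_eq_foldr, stabPath_eq_foldr, stabPath_eq_foldr, hx, ← List.foldr_append, happ]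

lemma continuous_stabEquiv (Γ : DirGraph.{u}) : Continuous (stabEquiv Γ) := by
  refine continuous_generateFrom_iff.mpr ?_
  rintro s ⟨α', β', F', hr', hF', rfl⟩
  show IsOpen ((stabEquiv Γ) ⁻¹' Zset Γ.stab α' β' F')
  obtain ⟨w, hrng⟩ | ⟨w, p, hrng⟩ :
      (∃ w, α'.rng = Sum.inl w) ∨ (∃ w p, α'.rng = Sum.inr (w, p)) := by
    rcases α'.rng with w | ⟨w, p⟩
    exacts [Or.inl ⟨w, rfl⟩, Or.inr ⟨w, p, rfl⟩]
  · -- range is an old vertex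
    rcases finPath_decomp α' with ⟨i, α₀, hαe, hαr⟩ | ⟨u, pp, hαr, -⟩
    swap
    · rw [hrng] at hαr
      exact absurd hαr (by simp)
    rcases finPath_decomp β' with ⟨j, β₀, hβe, hβr⟩ | ⟨u, pp, hβr, -⟩
    swap
    · rw [hr', hβr] at hrng
      exact absurd hrng (by simp)
    obtain ⟨F₀, rfl, hF₀⟩ := finsetF_decomp (w := α₀.rng) (F := F') (by
      intro e he
      rw [hF' e he]
      exact hαr)
    have hr₀ : α₀.rng = β₀.rng := Sum.inl_injective (hαr.symm.trans (hr'.trans hβr))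
    have hZ : Zset Γ.stab α' β' (F₀.map (inlEmb Γ))
        = Zset Γ.stab (stabFin i α₀) (stabFin j β₀) (F₀.map (inlEmb Γ)) :=
      Zset_congr _ hαe hβe (by rw [hαr, stabFin_rng])
    rw [hZ, ← image_basic Γ α₀ β₀ F₀ hr₀ i j,
      Set.preimage_image_eq _ (stabEquiv Γ).injective]
    exact ((isOpen_of_mem_genSet ⟨α₀, β₀, F₀, hr₀, hF₀, rfl⟩).prod (isOpen_discrete _))
  · -- range is a head vertex
    by_cases hmem : Sum.inr (w, p) ∈ F'
    · have hempty : Zset Γ.stab α' β' F' = ∅ := by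
        ext t
        simp only [Set.mem_empty_iff_false, iff_false]
        rintro ⟨z, hz, -⟩
        obtain ⟨hzsrc, hzF⟩ := mem_cyl_ofVertex.mp hz
        rw [hrng] at hzsrc
        exact hzF _ hmem (edge?_zero_of_src_inr hzsrc)
      rw [hempty]
      simp only [Set.preimage_empty]
      exact isOpen_empty
    · have hFe : F' = ∅ := by
        refine Finset.eq_empty_of_forall_notMem fun e he => ?_
        have hse := hF' e he
        rw [hrng] at hse
        cases e with
        | inl e₀ => exact absurd hse (by simp)
        | inr q =>
          have : q = (w, p) := Sum.inr_injective hse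
          subst this
          exact hmem he
      subst hFe
      rcases finPath_decomp α' with ⟨i, α₀, -, hαr⟩ | ⟨u, pp, hαr, hαapp⟩
      · rw [hrng] at hαr
        exact absurd hαr.symm (by simp)
      rcases finPath_decomp β' with ⟨j, β₀, -, hβr⟩ | ⟨u2, pp2, hβr, hβapp⟩
      · rw [hr', hβr] at hrng
        exact absurd hrng.symm (by simp)
      obtain ⟨h1, h2⟩ : u = w ∧ pp = p := by
        rw [hrng] at hαr
        injection hαr.symm with h'
        exact ⟨congrArg Prod.fst h', congrArg Prod.snd h'⟩
      rw [h1, h2] at hαapp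
      obtain ⟨h3, h4⟩ : u2 = w ∧ pp2 = p := by
        rw [← hr', hrng] at hβr
        injection hβr.symm with h'
        exact ⟨congrArg Prod.fst h', congrArg Prod.snd h'⟩
      rw [h3, h4] at hβapp
      have hZZ : Zset Γ.stab α' β' ∅ = stabEquiv Γ ''
          (Zset Γ (FinPath.ofVertex Γ w) (FinPath.ofVertex Γ w) ∅ ×ˢ
            ({(p + 1 + α'.edges.length, p + 1 + β'.edges.length)} : Set (ℕ × ℕ))) := by
        ext T
        constructor
        · rintro ⟨z, hz, hT⟩
          have hzsrc : z.src = Sum.inr (w, p) := by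
            rw [← hrng]
            exact (mem_cyl_ofVertex.mp hz).1
          obtain ⟨x, hx, rfl⟩ := exists_stabPath hzsrc
          refine ⟨(⟨(x, 0, x), 0, 0, by simp, by simp, by simp, rfl⟩,
            (p + 1 + α'.edges.length, p + 1 + β'.edges.length)), ⟨⟨x, ?_, ?_⟩, rfl⟩, ?_⟩
          · exact mem_cyl_ofVertex.mpr ⟨hx, by simp⟩
          · refine Prod.ext_iff.mpr ⟨rfl, Prod.ext_iff.mpr ⟨by norm_num, rfl⟩⟩
          · refine Subtype.ext ?_
            rw [hT, stabEquiv_apply, stabMap_val]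
            dsimp only
            simp only [Prod.mk.injEq]
            refine ⟨(concat_stabPath hαapp x hx).symm, ?_, (concat_stabPath hβapp x hx).symm⟩
            push_cast
            ring
        · rintro ⟨⟨t, q⟩, ⟨⟨x, hx, ht⟩, hq⟩, rfl⟩
          obtain rfl : q = (p + 1 + α'.edges.length, p + 1 + β'.edges.length) := hq
          have hxsrc : x.src = w := (mem_cyl_ofVertex.mp hx).1
          have ht1 : t.1.1 = x := by
            have := congrArg Prod.fst ht
            exact this
          have ht2 : t.1.2.1 = 0 := by
            have := congrArg (fun q => q.2.1) ht
            simpa using this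
          have ht3 : t.1.2.2 = x := congrArg (fun q => q.2.2) ht
          refine ⟨stabPath (p + 1) x, ?_, ?_⟩
          · refine mem_cyl_ofVertex.mpr ⟨?_, by simp⟩
            rw [stabPath_src, hxsrc, hrng]
            rfl
          · rw [stabEquiv_apply, stabMap_val]
            dsimp only
            rw [ht1, ht2, ht3]
            simp only [Prod.mk.injEq]
            refine ⟨(concat_stabPath hαapp x hxsrc).symm, ?_, (concat_stabPath hβapp x hxsrc).symm⟩
            push_cast
            ring
      rw [hZZ, Set.preimage_image_eq _ (stabEquiv Γ).injective]
      exact ((isOpen_of_mem_genSet ⟨FinPath.ofVertex Γ w, FinPath.ofVertex Γ w, ∅, rfl,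
        by simp, rfl⟩).prod (isOpen_discrete _))

/-! ### The groupoid isomorphism `G_E × ℛ ≅ G_{SE}` -/

open GroupoidStruct in
/-- The homeomorphism `G_E × ℛ ≃ₜ G_{SE}`. -/
noncomputable def stabHomeo (Γ : DirGraph.{u}) :
    (Γ.GraphGpd × (ℕ × ℕ)) ≃ₜ Γ.stab.GraphGpd :=
  Equiv.toHomeomorphOfContinuousOpen (stabEquiv Γ) (continuous_stabEquiv Γ)
    (isOpenMap_stabEquiv Γ)

open GroupoidStruct in
/-- The isomorphism of topological groupoids `G_E × ℛ ≅ G_{SE}`. -/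
noncomputable def stabIso (Γ : DirGraph.{u}) :
    GroupoidIso ((graphGpd Γ).prod Rho) (graphGpd Γ.stab) where
  toHomeomorph := stabHomeo Γ
  map_src := by
    rintro ⟨t, i, j⟩
    refine Subtype.ext ?_
    show (stabMap Γ (gsrc t, (j, j))).1 = (gsrc (stabMap Γ (t, (i, j)))).1
    simp only [stabMap_val, gsrc_val]
    simp only [Prod.mk.injEq, true_and, and_true]
    ring
  map_rng := by
    rintro ⟨t, i, j⟩
    refine Subtype.ext ?_
    show (stabMap Γ (grng t, (i, i))).1 = (grng (stabMap Γ (t, (i, j)))).1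
    simp only [stabMap_val, grng_val]
    simp only [Prod.mk.injEq, true_and, and_true]
    ring
  map_inv := by
    rintro ⟨t, i, j⟩
    refine Subtype.ext ?_
    show (stabMap Γ (ginv t, (j, i))).1 = (ginv (stabMap Γ (t, (i, j)))).1
    simp only [stabMap_val, ginv_val]
    simp only [Prod.mk.injEq, true_and, and_true]
    ring
  map_mul := by
    rintro ⟨t, i, j⟩ ⟨u, i', j'⟩ h
    have h1 : gsrc t = grng u := congrArg Prod.fst h
    have ht : t.1.2.2 = u.1.1 := congrArg (fun s => s.1.1) h1
    have h2 : ((j, j) : ℕ × ℕ) = (i', i') := congrArg Prod.snd h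
    have hj : j = i' := congrArg Prod.fst h2
    have hcomp : (stabMap Γ (t, (i, j))).1.2.2 = (stabMap Γ (u, (i', j'))).1.1 := by
      rw [stabMap_val, stabMap_val]
      dsimp only
      rw [hj, ht]
    refine Subtype.ext ?_
    show (stabMap Γ (gmul t u, (i, j'))).1
      = (gmul (stabMap Γ (t, (i, j))) (stabMap Γ (u, (i', j')))).1
    rw [gmul_val _ _ hcomp]
    simp only [stabMap_val]
    rw [gmul_val _ _ ht]
    simp only [Prod.mk.injEq, true_and, and_true]
    rw [hj]
    ring

end DirGraph

namespace GroupoidStruct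

variable {G : Type u} {H : Type v} {K : Type w}
variable [TopologicalSpace G] [TopologicalSpace H] [TopologicalSpace K]
variable {S : GroupoidStruct G} {T : GroupoidStruct H} {U : GroupoidStruct K}

/-- Composition of groupoid isomorphisms. -/
def GroupoidIso.trans (e1 : GroupoidIso S T) (e2 : GroupoidIso T U) : GroupoidIso S U where
  toHomeomorph := e1.toHomeomorph.trans e2.toHomeomorph
  map_mul a b h := by
    have hc : T.src (e1.toHomeomorph a) = T.rng (e1.toHomeomorph b) := by
      rw [← e1.map_src, ← e1.map_rng, h]
    simp only [Homeomorph.trans_apply]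
    rw [e1.map_mul a b h, e2.map_mul _ _ hc]
  map_inv a := by simp only [Homeomorph.trans_apply, e1.map_inv, e2.map_inv]
  map_src a := by simp only [Homeomorph.trans_apply, e1.map_src, e2.map_src]
  map_rng a := by simp only [Homeomorph.trans_apply, e1.map_rng, e2.map_rng]

/-- Inverse of a groupoid isomorphism. -/
def GroupoidIso.symm (e : GroupoidIso S T) : GroupoidIso T S where
  toHomeomorph := e.toHomeomorph.symm
  map_src a := by
    apply e.toHomeomorph.injective
    rw [Homeomorph.apply_symm_apply, e.map_src, Homeomorph.apply_symm_apply]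
  map_rng a := by
    apply e.toHomeomorph.injective
    rw [Homeomorph.apply_symm_apply, e.map_rng, Homeomorph.apply_symm_apply]
  map_inv a := by
    apply e.toHomeomorph.injective
    rw [Homeomorph.apply_symm_apply, e.map_inv, Homeomorph.apply_symm_apply]
  map_mul a b h := by
    have hc : S.src (e.toHomeomorph.symm a) = S.rng (e.toHomeomorph.symm b) := by
      apply e.toHomeomorph.injective
      rw [e.map_src, e.map_rng, Homeomorph.apply_symm_apply, Homeomorph.apply_symm_apply, h]
    apply e.toHomeomorph.injective
    rw [Homeomorph.apply_symm_apply, e.map_mul _ _ hc, Homeomorph.apply_symm_apply,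
      Homeomorph.apply_symm_apply]

end GroupoidStruct


open GroupoidStruct DirGraph in
/-- For directed graphs `E` and `F`, `G_E × ℛ ≅ G_F × ℛ` if and only if `G_{SE} ≅ G_{SF}`. -/
theorem graphGpd_prod_Rho_iso_iff_stab_iso (Γ Δ : DirGraph.{u}) :
    Nonempty (GroupoidIso ((graphGpd Γ).prod Rho) ((graphGpd Δ).prod Rho)) ↔
    Nonempty (GroupoidIso (graphGpd Γ.stab) (graphGpd Δ.stab)) := by
  constructor
  · rintro ⟨h⟩
    exact ⟨((stabIso Γ).symm.trans h).trans (stabIso Δ)⟩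
  · rintro ⟨h⟩
    exact ⟨((stabIso Γ).trans h).trans (stabIso Δ).symm⟩
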